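/- arXiv:1010.4248 — 4 statements merged into one kernel-verified Lean document; each statement's English description precedes it below -/
import Mathlib

section
/- The function g:(0,∞)→[0,∞) is finite-valued, decreasing (nonincreasing) and convex. -/
open MeasureTheory Filter Set
open scoped ENNReal NNReal

noncomputable section

abbrev Rd (d : ℕ) := Fin d → ℝ

/-- `nrm` is a norm on `ℝ^d`. -/
def IsNorm {d : ℕ} (nrm : Rd d → ℝ) : Prop :=
  (∀ x, 0 ≤ nrm x) ∧ (∀ x, nrm x = 0 ↔ x = 0) ∧
  (∀ (c : ℝ) (x : Rd d), nrm (c • x) = |c| * nrm x) ∧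
  (∀ x y, nrm (x + y) ≤ nrm x + nrm y)

/-- The standing assumptions on `φ`: increasing, nonnegative, left continuous,
`lim_{t↓0} φ(t) = 0`, and not identically zero on `[0,∞)`. -/
def PhiOK (φ : ℝ → ℝ) : Prop :=
  MonotoneOn φ (Ici 0) ∧ (∀ t, 0 ≤ t → 0 ≤ φ t) ∧
  (∀ t, 0 < t → Tendsto φ (nhdsWithin t (Iio t)) (nhds (φ t))) ∧
  Tendsto φ (nhdsWithin 0 (Ioi 0)) (nhds 0) ∧
  (∃ t, 0 ≤ t ∧ φ t ≠ 0)

/-- distance from a point to a set, `d(x,A) = inf_{y ∈ A} ‖x - y‖`. -/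
def dSet {d : ℕ} (nrm : Rd d → ℝ) (x : Rd d) (A : Set (Rd d)) : ℝ :=
  sInf ((fun y => nrm (x - y)) '' A)

/-- the unit cube `[0,1)^d`. -/
def unitCube (d : ℕ) : Set (Rd d) := univ.pi fun _ => Ico (0:ℝ) 1

/-- `f_N(η) = inf_C E[φ((N/η)^{1/d} d(U,C))]`, infimum over nonempty codebooks of at most
`⌊N⌋` points, `U` uniform on `[0,1)^d`; it is `∞` for `N < 1` (empty infimum). -/
def fNq {d : ℕ} (nrm : Rd d → ℝ) (φ : ℝ → ℝ) (N η : ℝ) : ℝ≥0∞ :=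
  ⨅ (C : Finset (Rd d)) (_ : C.Nonempty) (_ : (C.card : ℝ) ≤ N),
    ∫⁻ x in unitCube d, ENNReal.ofReal (φ ((N / η) ^ (1 / (d:ℝ)) * dSet nrm x (C : Set (Rd d)))) ∂volume

/-- `g(η) = inf_{N ≥ 1} f_N(η)` for `η > 0`, extended by `g(0) = lim_{η↓0} g(η) = sup_{η>0} g(η)`
for `η ≤ 0`. -/
def gq {d : ℕ} (nrm : Rd d → ℝ) (φ : ℝ → ℝ) (η : ℝ) : ℝ≥0∞ :=
  if 0 < η then ⨅ N ∈ Ici (1:ℝ), fNq nrm φ N η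
  else ⨆ η' ∈ Ioi (0:ℝ), ⨅ N ∈ Ici (1:ℝ), fNq nrm φ N η'

/-- the absolutely continuous part `μ_c` of `μ` with respect to Lebesgue measure. -/
def muc {d : ℕ} (μ : Measure (Rd d)) : Measure (Rd d) :=
  volume.withDensity (μ.rnDeriv volume)

/-- Orlicz norm `‖F(X)‖_φ = inf{t > 0 : E[φ(F(X)/t)] ≤ 1}` (as the `sInf` in `ℝ≥0∞`,
so it is `∞` when no such `t` exists), where `X` has law `μ`. -/
def orliczN {d : ℕ} (φ : ℝ → ℝ) (μ : Measure (Rd d)) (F : Rd d → ℝ) : ℝ≥0∞ :=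
  sInf {s : ℝ≥0∞ | ∃ t : ℝ, 0 < t ∧ s = ENNReal.ofReal t ∧
    ∫⁻ x, ENNReal.ofReal (φ (F x / t)) ∂μ ≤ 1}

/-- the quantization error `δ(N|X,φ)`, where `X` has law `μ`. -/
def quantErr {d : ℕ} (nrm : Rd d → ℝ) (φ : ℝ → ℝ) (μ : Measure (Rd d)) (N : ℝ) : ℝ≥0∞ :=
  ⨅ (C : Finset (Rd d)) (_ : C.Nonempty) (_ : (C.card : ℝ) ≤ N),
    orliczN φ μ (fun x => dSet nrm x (C : Set (Rd d)))

/-- `I`, the value of the point allocation problem. -/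
def pav {d : ℕ} (nrm : Rd d → ℝ) (φ : ℝ → ℝ) (μ : Measure (Rd d)) : ℝ≥0∞ :=
  ⨅ (ξ : Rd d → ℝ) (_ : ∀ x, 0 ≤ ξ x) (_ : Integrable ξ volume)
    (_ : ∫⁻ x, gq nrm φ (ξ x) ∂(muc μ) ≤ 1),
    ENNReal.ofReal (∫ x, ξ x)

/-- `ḡ(a) = inf_{η>0} [g(η) + aη]`. -/
def gbarq {d : ℕ} (nrm : Rd d → ℝ) (φ : ℝ → ℝ) (a : ℝ≥0∞) : ℝ≥0∞ :=
  ⨅ η ∈ Ioi (0:ℝ), (gq nrm φ η + a * ENNReal.ofReal η)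


/-! ### Auxiliary development for `statement4` -/

namespace Stmt4

open scoped Pointwise

variable {d : ℕ} {nrm : Rd d → ℝ} {φ : ℝ → ℝ}

/-! #### Basic facts about the norm -/

lemma nrm_zero (hnrm : IsNorm nrm) : nrm 0 = 0 := (hnrm.2.1 0).mpr rfl

lemma nrm_sum_le (hnrm : IsNorm nrm) {ι : Type*} (s : Finset ι) (f : ι → Rd d) :
    nrm (∑ i ∈ s, f i) ≤ ∑ i ∈ s, nrm (f i) := by
  classical
  induction s using Finset.cons_induction with
  | empty => simp [nrm_zero hnrm]
  | cons i s hi ih =>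
      rw [Finset.sum_cons, Finset.sum_cons]
      exact le_trans (hnrm.2.2.2 _ _) (add_le_add_right ih _)

/-- The basis vectors. -/
def ebas (i : Fin d) : Rd d := fun j => if i = j then (1 : ℝ) else 0

/-- A Lipschitz-type constant for `nrm`. -/
def LB (nrm : Rd d → ℝ) : ℝ := ∑ i : Fin d, nrm (ebas i)

lemma LB_nonneg (hnrm : IsNorm nrm) : 0 ≤ LB nrm :=
  Finset.sum_nonneg fun _ _ => hnrm.1 _

lemma nrm_le_sum_abs (hnrm : IsNorm nrm) (z : Rd d) :
    nrm z ≤ ∑ i : Fin d, |z i| * nrm (ebas i) := by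
  calc nrm z = nrm (∑ i : Fin d, (z i) • ebas i) := by
        congr 1
        exact pi_eq_sum_univ z
    _ ≤ ∑ i : Fin d, nrm ((z i) • ebas i) := nrm_sum_le hnrm _ _
    _ = ∑ i : Fin d, |z i| * nrm (ebas i) :=
        Finset.sum_congr rfl fun i _ => hnrm.2.2.1 _ _

lemma nrm_le_LB_dist (hnrm : IsNorm nrm) (x y : Rd d) :
    nrm (x - y) ≤ LB nrm * dist x y := by
  refine (nrm_le_sum_abs hnrm (x - y)).trans ?_
  rw [LB, Finset.sum_mul]
  refine Finset.sum_le_sum fun i _ => ?_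
  rw [mul_comm (nrm (ebas i))]
  refine mul_le_mul_of_nonneg_right ?_ (hnrm.1 _)
  have h := dist_le_pi_dist x y i
  rw [Real.dist_eq] at h
  exact h

lemma abs_nrm_sub_le (hnrm : IsNorm nrm) (x y : Rd d) :
    |nrm x - nrm y| ≤ nrm (x - y) := by
  have e1 : y + (x - y) = x := by abel
  have hxy : nrm x ≤ nrm y + nrm (x - y) := by
    have := hnrm.2.2.2 y (x - y); rwa [e1] at this
  have e2 : x + (y - x) = y := by abel
  have h2 : nrm (y - x) = nrm (x - y) := by
    have e3 : y - x = (-1 : ℝ) • (x - y) := by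
      rw [neg_one_smul]; abel
    rw [e3, hnrm.2.2.1]; norm_num
  have hyx : nrm y ≤ nrm x + nrm (x - y) := by
    have := hnrm.2.2.2 x (y - x); rw [e2] at this; rwa [h2] at this
  rw [abs_sub_le_iff]
  constructor <;> linarith

/-! #### Facts about `dSet` -/

lemma dSet_bddBelow (hnrm : IsNorm nrm) (x : Rd d) (A : Set (Rd d)) :
    BddBelow ((fun y => nrm (x - y)) '' A) :=
  ⟨0, by rintro r ⟨y, _, rfl⟩; exact hnrm.1 _⟩

lemma dSet_nonneg (hnrm : IsNorm nrm) (x : Rd d) (A : Set (Rd d)) :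
    0 ≤ dSet nrm x A :=
  Real.sInf_nonneg (by rintro r ⟨y, _, rfl⟩; exact hnrm.1 _)

lemma dSet_le (hnrm : IsNorm nrm) (x : Rd d) {A : Set (Rd d)} {y : Rd d} (hy : y ∈ A) :
    dSet nrm x A ≤ nrm (x - y) :=
  csInf_le (dSet_bddBelow hnrm x A) ⟨y, hy, rfl⟩

lemma le_dSet (hnrm : IsNorm nrm) {x : Rd d} {A : Set (Rd d)} (hA : A.Nonempty) {c : ℝ}
    (h : ∀ y ∈ A, c ≤ nrm (x - y)) : c ≤ dSet nrm x A :=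
  le_csInf (hA.image _) (by rintro r ⟨y, hy, rfl⟩; exact h y hy)

lemma dSet_anti (hnrm : IsNorm nrm) (x : Rd d) {A B : Set (Rd d)} (hA : A.Nonempty)
    (hAB : A ⊆ B) : dSet nrm x B ≤ dSet nrm x A :=
  csInf_le_csInf (dSet_bddBelow hnrm x B) (hA.image _) (Set.image_mono hAB)

lemma dSet_sub_le (hnrm : IsNorm nrm) (x z : Rd d) {A : Set (Rd d)} (hA : A.Nonempty) :
    dSet nrm x A ≤ dSet nrm z A + nrm (x - z) := by
  have h : ∀ y ∈ A, dSet nrm x A - nrm (x - z) ≤ nrm (z - y) := by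
    intro y hy
    have h1 : dSet nrm x A ≤ nrm (x - y) := dSet_le hnrm x hy
    have h2 : nrm (x - y) ≤ nrm (x - z) + nrm (z - y) := by
      have := hnrm.2.2.2 (x - z) (z - y)
      have e : (x - z) + (z - y) = x - y := by abel
      rwa [e] at this
    linarith
  have := le_dSet hnrm hA h
  linarith

lemma dSet_continuous (hnrm : IsNorm nrm) {C : Finset (Rd d)} (hC : C.Nonempty) :
    Continuous fun x => dSet nrm x (C : Set (Rd d)) := by
  have hCne : (C : Set (Rd d)).Nonempty := by exact_mod_cast hC
  refine (LipschitzWith.of_dist_le_mul (K := Real.toNNReal (LB nrm)) fun x z => ?_).continuous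
  have hb : ∀ p q : Rd d, nrm (p - q) ≤ (Real.toNNReal (LB nrm) : ℝ) * dist p q := by
    intro p q
    refine (nrm_le_LB_dist hnrm p q).trans ?_
    exact mul_le_mul_of_nonneg_right (Real.le_coe_toNNReal _) dist_nonneg
  rw [Real.dist_eq, abs_sub_le_iff]
  constructor
  · have h1 := dSet_sub_le hnrm x z hCne
    have h2 := hb x z
    linarith
  · have h1 := dSet_sub_le hnrm z x hCne
    have h2 := hb z x
    rw [dist_comm] at h2
    linarith

lemma dSet_affine (hnrm : IsNorm nrm) {r : ℝ} (hr : 0 < r) (t : Rd d) {A : Set (Rd d)}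
    (hA : A.Nonempty) (y : Rd d) :
    dSet nrm (r • y + t) ((fun z => r • z + t) '' A) = r * dSet nrm y A := by
  have himg : (fun z => nrm (r • y + t - z)) '' ((fun z => r • z + t) '' A)
      = (fun w => r * w) '' ((fun z => nrm (y - z)) '' A) := by
    rw [Set.image_image, Set.image_image]
    refine Set.image_congr fun z _ => ?_
    have e : r • y + t - (r • z + t) = r • (y - z) := by
      rw [smul_sub]; abel
    rw [e, hnrm.2.2.1, abs_of_pos hr]
  rw [dSet, himg, dSet]
  have hsmul : (fun w => r * w) '' ((fun z => nrm (y - z)) '' A)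
      = r • ((fun z => nrm (y - z)) '' A) := by
    rw [← Set.image_smul]
    simp [smul_eq_mul]
  rw [hsmul, Real.sInf_smul_of_nonneg hr.le, smul_eq_mul]

/-! #### The unit cube -/

lemma measurableSet_unitCube : MeasurableSet (unitCube d) :=
  MeasurableSet.univ_pi fun _ => measurableSet_Ico

lemma volume_unitCube : volume (unitCube d) = 1 := by
  rw [unitCube, volume_pi_pi]
  simp [Real.volume_Ico]

lemma mem_unitCube {x : Rd d} : x ∈ unitCube d ↔ ∀ i, 0 ≤ x i ∧ x i < 1 := by
  simp [unitCube, Set.mem_pi, Set.mem_Ico]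

/-! #### The monotone extension of `φ` -/

/-- Extend `φ` to a monotone function on all of `ℝ`. -/
def phiP (φ : ℝ → ℝ) : ℝ → ℝ := fun t => φ (max t 0)

lemma phiP_mono (hφ : PhiOK φ) : Monotone (phiP φ) := fun a b hab =>
  hφ.1 (Set.mem_Ici.2 (le_max_right a 0)) (Set.mem_Ici.2 (le_max_right b 0))
    (max_le_max hab le_rfl)

lemma phiP_eq {t : ℝ} (ht : 0 ≤ t) : phiP φ t = φ t := by rw [phiP, max_eq_left ht]

lemma phiP_measurable (hφ : PhiOK φ) : Measurable (phiP φ) := (phiP_mono hφ).measurable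

/-! #### The basic integral quantity -/

/-- `Gq M C = ∫_{[0,1)^d} φ(M d(x,C)) dx`. -/
def Gq (nrm : Rd d → ℝ) (φ : ℝ → ℝ) (M : ℝ) (C : Finset (Rd d)) : ℝ≥0∞ :=
  ∫⁻ x in unitCube d, ENNReal.ofReal (φ (M * dSet nrm x (C : Set (Rd d)))) ∂volume

lemma Gq_eq (hnrm : IsNorm nrm) {M : ℝ} (hM : 0 ≤ M) (C : Finset (Rd d)) :
    Gq nrm φ M C
      = ∫⁻ x in unitCube d, ENNReal.ofReal (phiP φ (M * dSet nrm x (C : Set (Rd d)))) ∂volume := by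
  refine lintegral_congr fun x => ?_
  rw [phiP_eq (mul_nonneg hM (dSet_nonneg hnrm _ _))]

lemma Gq_integrand_measurable (hnrm : IsNorm nrm) (hφ : PhiOK φ) (M : ℝ)
    {C : Finset (Rd d)} (hC : C.Nonempty) :
    Measurable fun x => ENNReal.ofReal (phiP φ (M * dSet nrm x (C : Set (Rd d)))) :=
  ENNReal.measurable_ofReal.comp ((phiP_measurable hφ).comp
    ((continuous_const.mul (dSet_continuous hnrm hC)).measurable))

lemma Gq_mono (hnrm : IsNorm nrm) (hφ : PhiOK φ) {M M' : ℝ} (h0 : 0 ≤ M) (h : M ≤ M')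
    (C : Finset (Rd d)) : Gq nrm φ M C ≤ Gq nrm φ M' C := by
  refine lintegral_mono fun x => ENNReal.ofReal_le_ofReal ?_
  have hd0 := dSet_nonneg hnrm x (C : Set (Rd d))
  exact hφ.1 (Set.mem_Ici.2 (mul_nonneg h0 hd0)) (Set.mem_Ici.2 (mul_nonneg (h0.trans h) hd0))
    (mul_le_mul_of_nonneg_right h hd0)

/-! #### `fNq` and `gq` basics -/

lemma fNq_le_Gq {N η : ℝ} {C : Finset (Rd d)} (hC : C.Nonempty) (hcard : (C.card : ℝ) ≤ N) :
    fNq nrm φ N η ≤ Gq nrm φ ((N / η) ^ (1 / (d : ℝ))) C := by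
  rw [fNq]
  refine iInf_le_of_le C ?_
  rw [iInf_pos hC, iInf_pos hcard]
  exact le_rfl

lemma gq_eq {η : ℝ} (hη : 0 < η) :
    gq nrm φ η = ⨅ N ∈ Set.Ici (1:ℝ), fNq nrm φ N η := if_pos hη

lemma gq_le_fNq {η N : ℝ} (hη : 0 < η) (hN : 1 ≤ N) : gq nrm φ η ≤ fNq nrm φ N η := by
  rw [gq_eq hη]
  exact iInf₂_le N hN

lemma nrm_le_LB_of_mem (hnrm : IsNorm nrm) {x : Rd d} (hx : x ∈ unitCube d) :
    nrm x ≤ LB nrm := by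
  refine (nrm_le_sum_abs hnrm x).trans ?_
  rw [LB]
  refine Finset.sum_le_sum fun i _ => ?_
  have hxi := (mem_unitCube.1 hx) i
  have h1 : |x i| ≤ 1 := by rw [abs_of_nonneg hxi.1]; linarith [hxi.2]
  calc |x i| * nrm (ebas i) ≤ 1 * nrm (ebas i) :=
        mul_le_mul_of_nonneg_right h1 (hnrm.1 _)
    _ = nrm (ebas i) := one_mul _

lemma Gq_lt_top (hnrm : IsNorm nrm) (hφ : PhiOK φ) {M : ℝ} (hM : 0 ≤ M)
    {C : Finset (Rd d)} (hC : C.Nonempty) : Gq nrm φ M C < ⊤ := by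
  obtain ⟨c₀, hc₀⟩ := hC
  set R : ℝ := LB nrm + nrm (-c₀) with hR
  have hb : ∀ x ∈ unitCube d,
      ENNReal.ofReal (φ (M * dSet nrm x (C : Set (Rd d)))) ≤ ENNReal.ofReal (φ (M * R)) := by
    intro x hx
    refine ENNReal.ofReal_le_ofReal ?_
    have h1 : dSet nrm x (C : Set (Rd d)) ≤ R := by
      refine (dSet_le hnrm x (by exact_mod_cast hc₀)).trans ?_
      have e : x - c₀ = x + (-c₀) := by abel
      rw [e, hR]
      exact (hnrm.2.2.2 _ _).trans (add_le_add_left (nrm_le_LB_of_mem hnrm hx) _)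
    have hd0 := dSet_nonneg hnrm x (C : Set (Rd d))
    exact hφ.1 (Set.mem_Ici.2 (mul_nonneg hM hd0))
      (Set.mem_Ici.2 (mul_nonneg hM (hd0.trans h1)))
      (mul_le_mul_of_nonneg_left h1 hM)
  calc Gq nrm φ M C ≤ ∫⁻ _ in unitCube d, ENNReal.ofReal (φ (M * R)) ∂volume :=
        setLIntegral_mono' measurableSet_unitCube hb
    _ = ENNReal.ofReal (φ (M * R)) := by
        rw [setLIntegral_const, volume_unitCube, mul_one]
    _ < ⊤ := ENNReal.ofReal_lt_top

lemma gq_ne_top (hnrm : IsNorm nrm) (hφ : PhiOK φ) {η : ℝ} (hη : 0 < η) :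
    gq nrm φ η ≠ ⊤ := by
  have hone : ((Finset.card ({0} : Finset (Rd d)) : ℝ)) ≤ (1:ℝ) := by simp
  have hne : ({0} : Finset (Rd d)).Nonempty := ⟨0, Finset.mem_singleton_self 0⟩
  have h1 : gq nrm φ η ≤ Gq nrm φ (((1:ℝ) / η) ^ (1 / (d:ℝ))) ({0} : Finset (Rd d)) :=
    (gq_le_fNq hη le_rfl).trans (fNq_le_Gq hne hone)
  exact ne_top_of_le_ne_top
    (Gq_lt_top hnrm hφ (Real.rpow_nonneg (by positivity) _) hne).ne h1

lemma gq_anti (hnrm : IsNorm nrm) (hφ : PhiOK φ) :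
    AntitoneOn (gq nrm φ) (Set.Ioi (0:ℝ)) := by
  intro η hη η' hη' hle
  rw [gq_eq (Set.mem_Ioi.1 hη), gq_eq (Set.mem_Ioi.1 hη')]
  refine iInf_mono fun N => iInf_mono fun hN => ?_
  rw [fNq, fNq]
  refine iInf_mono fun C => iInf_mono fun hC => iInf_mono fun hcard => ?_
  have hη0 : (0:ℝ) < η := Set.mem_Ioi.1 hη
  have hN1 : (1:ℝ) ≤ N := hN
  have hη'0 : (0:ℝ) < η' := Set.mem_Ioi.1 hη'
  have h0' : 0 ≤ (N/η')^(1/(d:ℝ)) :=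
    Real.rpow_nonneg (div_nonneg (by linarith) hη'0.le) _
  have hMM : (N/η')^(1/(d:ℝ)) ≤ (N/η)^(1/(d:ℝ)) := by
    refine Real.rpow_le_rpow (div_nonneg (by linarith) hη'0.le) ?_ (by positivity)
    rw [div_le_div_iff₀ hη'0 hη0]
    nlinarith
  exact Gq_mono hnrm hφ h0' hMM C

/-! #### Change of variables for the tiling argument -/

lemma lintegral_comp_affine (h : Rd d → ℝ≥0∞) (hh : Measurable h) {k : ℕ} (hk : 0 < k)
    (t : Rd d) :
    ∫⁻ x in (fun x : Rd d => (k:ℝ) • x - t) ⁻¹' unitCube d, h ((k:ℝ) • x - t) ∂volume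
      = ENNReal.ofReal (((k:ℝ)⁻¹) ^ d) * ∫⁻ y in unitCube d, h y ∂volume := by
  have hk0 : ((k:ℝ)) ≠ 0 := Nat.cast_ne_zero.2 hk.ne'
  have hSmeas : Measurable fun x : Rd d => (k:ℝ) • x - t :=
    (measurable_const_smul ((k:ℝ))).sub measurable_const
  set F : Rd d → ℝ≥0∞ := (unitCube d).indicator h with hF
  have hFmeas : Measurable F := hh.indicator measurableSet_unitCube
  have step1 : ∫⁻ x in (fun x : Rd d => (k:ℝ) • x - t) ⁻¹' unitCube d,
      h ((k:ℝ) • x - t) ∂volume = ∫⁻ x, F ((k:ℝ) • x - t) ∂volume := by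
    rw [← lintegral_indicator (hSmeas measurableSet_unitCube)]
    refine lintegral_congr fun x => ?_
    exact Set.indicator_comp_right (g := h) (x := x)
      (fun x : Rd d => (k:ℝ) • x - t)
  have hmeas2 : Measurable fun z : Rd d => F (z - t) :=
    hFmeas.comp (measurable_id.sub measurable_const)
  have hmap := MeasureTheory.Measure.map_addHaar_smul (volume : Measure (Rd d))
    (r := (k:ℝ)) hk0
  have step2 : ∫⁻ x, F ((k:ℝ) • x - t) ∂volume
      = ENNReal.ofReal (((k:ℝ)⁻¹)^d) * ∫⁻ z, F z ∂volume := by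
    calc ∫⁻ x, F ((k:ℝ) • x - t) ∂volume
        = ∫⁻ z, F (z - t) ∂(Measure.map (((k:ℝ)) • ·) volume) := by
          rw [lintegral_map hmeas2 (measurable_const_smul _)]
      _ = ENNReal.ofReal |((k:ℝ) ^ Module.finrank ℝ (Rd d))⁻¹| * ∫⁻ z, F (z - t) ∂volume := by
          rw [hmap, lintegral_smul_measure, smul_eq_mul]
      _ = ENNReal.ofReal (((k:ℝ)⁻¹)^d) * ∫⁻ z, F z ∂volume := by
          have hfr : Module.finrank ℝ (Rd d) = d := Module.finrank_fin_fun ℝ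
          have habs : |((k:ℝ) ^ Module.finrank ℝ (Rd d))⁻¹| = ((k:ℝ)⁻¹)^d := by
            rw [hfr, abs_of_pos (by positivity), inv_pow]
          rw [habs]
          congr 1
          simp_rw [sub_eq_add_neg]
          exact lintegral_add_right_eq_self F (-t)
  have step3 : ∫⁻ z, F z ∂volume = ∫⁻ y in unitCube d, h y ∂volume := by
    rw [hF, lintegral_indicator measurableSet_unitCube]
  rw [step1, step2, step3]

/-! #### The cells cover the cube -/

lemma cube_subset_cells {k : ℕ} (hk : 0 < k) :
    unitCube d ⊆ ⋃ v : Fin d → Fin k,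
      (fun x : Rd d => (k:ℝ) • x - fun i => ((v i : ℕ) : ℝ)) ⁻¹' unitCube d := by
  intro x hx
  rw [mem_unitCube] at hx
  have hkR : (0:ℝ) < k := Nat.cast_pos.2 hk
  have hfl : ∀ i, ⌊(k:ℝ) * x i⌋₊ < k := by
    intro i
    have h0 : (0:ℝ) ≤ (k:ℝ) * x i := mul_nonneg hkR.le (hx i).1
    refine (Nat.floor_lt h0).2 ?_
    calc (k:ℝ) * x i < (k:ℝ) * 1 := by
          exact mul_lt_mul_of_pos_left (hx i).2 hkR
      _ = (k:ℝ) := mul_one _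
  refine Set.mem_iUnion.2 ⟨fun i => ⟨⌊(k:ℝ) * x i⌋₊, hfl i⟩, ?_⟩
  rw [Set.mem_preimage, mem_unitCube]
  intro i
  have h0 : (0:ℝ) ≤ (k:ℝ) * x i := mul_nonneg hkR.le (hx i).1
  have happ : ((k:ℝ) • x - fun j => ((((fun i => (⟨⌊(k:ℝ) * x i⌋₊, hfl i⟩ : Fin k)) j : Fin k) : ℕ) : ℝ)) i
      = (k:ℝ) * x i - (⌊(k:ℝ) * x i⌋₊ : ℝ) := by
    simp [Pi.sub_apply, Pi.smul_apply, smul_eq_mul]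
  rw [happ]
  constructor
  · have := Nat.floor_le h0
    linarith
  · have := Nat.lt_floor_add_one ((k:ℝ) * x i)
    linarith

/-! #### The core cell decomposition bound -/

lemma cell_bound (hnrm : IsNorm nrm) (hφ : PhiOK φ) {M : ℝ} (hM : 0 ≤ M) {k : ℕ}
    (hk : 0 < k) (D : (Fin d → Fin k) → Finset (Rd d)) (hD : ∀ v, (D v).Nonempty)
    (C : Finset (Rd d))
    (hC : ∀ v : Fin d → Fin k, ∀ y ∈ D v,
      ((k:ℝ)⁻¹ • y + (k:ℝ)⁻¹ • (fun i => ((v i : ℕ) : ℝ)) : Rd d) ∈ C) :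
    Gq nrm φ M C ≤ ∑ v : Fin d → Fin k,
      ENNReal.ofReal (((k:ℝ)⁻¹) ^ d) * Gq nrm φ (M / k) (D v) := by
  classical
  have hk0 : ((k:ℝ)) ≠ 0 := Nat.cast_ne_zero.2 hk.ne'
  have hCne : C.Nonempty := by
    obtain ⟨y, hy⟩ := hD (fun _ => ⟨0, hk⟩)
    exact ⟨_, hC (fun _ => ⟨0, hk⟩) y hy⟩
  set vR : (Fin d → Fin k) → Rd d := fun v => fun i => ((v i : ℕ) : ℝ) with hvR
  set S : (Fin d → Fin k) → Rd d → Rd d := fun v x => (k:ℝ) • x - vR v with hS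
  have hpt : ∀ v x, dSet nrm x (C : Set (Rd d))
      ≤ (k:ℝ)⁻¹ * dSet nrm (S v x) ((D v : Set (Rd d))) := by
    intro v x
    have hxy : x = (k:ℝ)⁻¹ • (S v x) + (k:ℝ)⁻¹ • vR v := by
      simp only [hS]
      rw [smul_sub, smul_smul, inv_mul_cancel₀ hk0, one_smul]
      abel
    have hDne : ((D v : Set (Rd d))).Nonempty := by exact_mod_cast hD v
    have himg : ((fun z => (k:ℝ)⁻¹ • z + (k:ℝ)⁻¹ • vR v) '' (D v : Set (Rd d)))
        ⊆ (C : Set (Rd d)) := by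
      rintro _ ⟨y, hy, rfl⟩
      exact_mod_cast hC v y (by exact_mod_cast hy)
    have h1 : dSet nrm x (C : Set (Rd d))
        ≤ dSet nrm x ((fun z => (k:ℝ)⁻¹ • z + (k:ℝ)⁻¹ • vR v) '' (D v : Set (Rd d))) :=
      dSet_anti hnrm x (hDne.image _) himg
    have h2 := dSet_affine hnrm (show (0:ℝ) < (k:ℝ)⁻¹ by positivity)
      ((k:ℝ)⁻¹ • vR v) (A := (D v : Set (Rd d))) hDne (S v x)
    rw [← hxy] at h2
    rw [← h2]
    exact h1
  have hint : ∀ v x, ENNReal.ofReal (phiP φ (M * dSet nrm x (C : Set (Rd d))))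
      ≤ ENNReal.ofReal (phiP φ ((M / k) * dSet nrm (S v x) ((D v : Set (Rd d))))) := by
    intro v x
    refine ENNReal.ofReal_le_ofReal (phiP_mono hφ ?_)
    rw [div_eq_mul_inv, mul_assoc]
    exact mul_le_mul_of_nonneg_left (hpt v x) hM
  have hMk : 0 ≤ M / k := by positivity
  rw [Gq_eq hnrm hM]
  calc ∫⁻ x in unitCube d, ENNReal.ofReal (phiP φ (M * dSet nrm x (C : Set (Rd d)))) ∂volume
      ≤ ∫⁻ x in ⋃ v : Fin d → Fin k, S v ⁻¹' unitCube d,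
          ENNReal.ofReal (phiP φ (M * dSet nrm x (C : Set (Rd d)))) ∂volume :=
        lintegral_mono_set (cube_subset_cells hk)
    _ ≤ ∑' v : Fin d → Fin k, ∫⁻ x in S v ⁻¹' unitCube d,
          ENNReal.ofReal (phiP φ (M * dSet nrm x (C : Set (Rd d)))) ∂volume :=
        lintegral_iUnion_le _ _
    _ = ∑ v : Fin d → Fin k, ∫⁻ x in S v ⁻¹' unitCube d,
          ENNReal.ofReal (phiP φ (M * dSet nrm x (C : Set (Rd d)))) ∂volume :=
        tsum_fintype _
    _ ≤ ∑ v : Fin d → Fin k, ∫⁻ x in S v ⁻¹' unitCube d,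
          ENNReal.ofReal (phiP φ ((M / k) * dSet nrm (S v x) ((D v : Set (Rd d))))) ∂volume :=
        Finset.sum_le_sum fun v _ => lintegral_mono fun x => hint v x
    _ = ∑ v : Fin d → Fin k, ENNReal.ofReal (((k:ℝ)⁻¹) ^ d) * Gq nrm φ (M / k) (D v) := by
        refine Finset.sum_congr rfl fun v _ => ?_
        have := lintegral_comp_affine
          (fun y => ENNReal.ofReal (phiP φ ((M / k) * dSet nrm y ((D v : Set (Rd d))))))
          (Gq_integrand_measurable hnrm hφ (M / k) (hD v)) hk (vR v)
        rw [this, Gq_eq hnrm hMk]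

/-! #### Counting: slicing the index set -/

lemma card_subtype_ne (hd : 0 < d) (i0 : Fin d) :
    Fintype.card {j : Fin d // j ≠ i0} = d - 1 := by
  have h := Fintype.card_subtype_compl (fun j : Fin d => j = i0)
  simp only [Fintype.card_subtype_eq, Fintype.card_fin] at h
  exact h

lemma sum_ite_slice (hd : 0 < d) {k u : ℕ} (hu : u < k) {Mo : Type*} [AddCommMonoid Mo]
    (X Y : Mo) :
    ∑ v : Fin d → Fin k, (if ((v ⟨0, hd⟩ : Fin k) : ℕ) < u then X else Y)
      = (u * k^(d-1)) • X + ((k - u) * k^(d-1)) • Y := by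
  classical
  set i0 : Fin d := ⟨0, hd⟩
  have hcard : Fintype.card ({j : Fin d // j ≠ i0} → Fin k) = k^(d-1) := by
    rw [Fintype.card_fun, Fintype.card_fin, card_subtype_ne hd i0]
  set e := Equiv.funSplitAt i0 (Fin k) with he
  have hsymm : ∀ q : Fin k × ({j : Fin d // j ≠ i0} → Fin k), (e.symm q) i0 = q.1 := by
    intro q
    simp [he, Equiv.funSplitAt, Equiv.piSplitAt]
  have h1 : ∑ v : Fin d → Fin k, (if ((v i0 : Fin k) : ℕ) < u then X else Y)
      = ∑ q : Fin k × ({j : Fin d // j ≠ i0} → Fin k),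
          (if ((q.1 : Fin k) : ℕ) < u then X else Y) := by
    rw [← Equiv.sum_comp e.symm (fun v => if ((v i0 : Fin k) : ℕ) < u then X else Y)]
    refine Finset.sum_congr rfl fun q _ => ?_
    rw [hsymm q]
  rw [h1, Fintype.sum_prod_type]
  have h2 : ∀ a : Fin k, ∑ _w : {j : Fin d // j ≠ i0} → Fin k,
      (if ((a : Fin k) : ℕ) < u then X else Y)
      = (k^(d-1)) • (if ((a : Fin k) : ℕ) < u then X else Y) := by
    intro a
    rw [Finset.sum_const, Finset.card_univ, hcard]
  simp_rw [h2, smul_ite]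
  rw [Finset.sum_ite]
  have hfil : (Finset.univ.filter fun a : Fin k => ((a : Fin k) : ℕ) < u)
      = Finset.Iio (⟨u, hu⟩ : Fin k) := by
    ext a
    simp [Fin.lt_def]
  have hcardu : (Finset.univ.filter fun a : Fin k => ((a : Fin k) : ℕ) < u).card = u := by
    rw [hfil, Fin.card_Iio]
  have hcardnu : (Finset.univ.filter fun a : Fin k => ¬ ((a : Fin k) : ℕ) < u).card = k - u := by
    have := Finset.card_filter_add_card_filter_not
      (s := (Finset.univ : Finset (Fin k))) (p := fun a : Fin k => ((a : Fin k) : ℕ) < u)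
    rw [hcardu, Finset.card_univ, Fintype.card_fin] at this
    omega
  rw [Finset.sum_const, Finset.sum_const, hcardu, hcardnu, smul_smul, smul_smul]

/-! #### Tiling and mixing constructions -/

lemma pow_cast_pos {k : ℕ} (hk : 0 < k) : (0:ℝ) < (k:ℝ) := Nat.cast_pos.2 hk

lemma tile_bound (hnrm : IsNorm nrm) (hφ : PhiOK φ) {M : ℝ} (hM : 0 ≤ M) {k : ℕ}
    (hk : 0 < k) {C₀ : Finset (Rd d)} (hC₀ : C₀.Nonempty) :
    ∃ C : Finset (Rd d), C.Nonempty ∧ C.card ≤ k^d * C₀.card ∧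
      Gq nrm φ M C ≤ Gq nrm φ (M / k) C₀ := by
  classical
  set T : (Fin d → Fin k) → Rd d → Rd d :=
    fun v y => (k:ℝ)⁻¹ • y + (k:ℝ)⁻¹ • (fun i => ((v i : ℕ) : ℝ)) with hT
  set C : Finset (Rd d) :=
    Finset.univ.biUnion (fun v : Fin d → Fin k => C₀.image (T v)) with hCdef
  have hmem : ∀ v : Fin d → Fin k, ∀ y ∈ C₀, T v y ∈ C := by
    intro v y hy
    exact Finset.mem_biUnion.2 ⟨v, Finset.mem_univ _, Finset.mem_image_of_mem _ hy⟩
  refine ⟨C, ?_, ?_, ?_⟩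
  · obtain ⟨y, hy⟩ := hC₀
    exact ⟨T (fun _ => ⟨0, hk⟩) y, hmem _ y hy⟩
  · calc C.card ≤ ∑ v : Fin d → Fin k, (C₀.image (T v)).card := Finset.card_biUnion_le
      _ ≤ ∑ _v : Fin d → Fin k, C₀.card :=
          Finset.sum_le_sum fun v _ => Finset.card_image_le
      _ = k^d * C₀.card := by
          rw [Finset.sum_const, Finset.card_univ, Fintype.card_fun, Fintype.card_fin,
            Fintype.card_fin, smul_eq_mul]
  · have hcb := cell_bound hnrm hφ hM hk (fun _ => C₀) (fun _ => hC₀) C hmem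
    refine hcb.trans (le_of_eq ?_)
    rw [Finset.sum_const, Finset.card_univ, Fintype.card_fun, Fintype.card_fin,
      Fintype.card_fin, nsmul_eq_mul]
    have hk0 : ((k:ℝ)) ≠ 0 := Nat.cast_ne_zero.2 hk.ne'
    have h1 : ((k^d : ℕ) : ℝ≥0∞) * ENNReal.ofReal (((k:ℝ)⁻¹)^d) = 1 := by
      rw [← ENNReal.ofReal_natCast, ← ENNReal.ofReal_mul (by positivity)]
      have : ((k^d : ℕ) : ℝ) * ((k:ℝ)⁻¹)^d = 1 := by
        push_cast
        rw [← mul_pow, mul_inv_cancel₀ hk0, one_pow]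
      rw [this, ENNReal.ofReal_one]
    rw [← mul_assoc, h1, one_mul]

lemma pow_mul_inv_pow (hd : 0 < d) {k : ℕ} (hk : 0 < k) :
    (k:ℝ)^(d-1) * ((k:ℝ)⁻¹)^d = (k:ℝ)⁻¹ := by
  have hk0 : ((k:ℝ)) ≠ 0 := Nat.cast_ne_zero.2 hk.ne'
  obtain ⟨n, rfl⟩ : ∃ n, d = n + 1 := ⟨d - 1, by omega⟩
  simp only [Nat.add_sub_cancel]
  rw [pow_succ, ← mul_assoc, ← mul_pow, mul_inv_cancel₀ hk0, one_pow, one_mul]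

lemma mix_bound (hd : 0 < d) (hnrm : IsNorm nrm) (hφ : PhiOK φ) {M : ℝ} (hM : 0 ≤ M)
    {k u : ℕ} (hu : 0 < u) (huk : u < k)
    {C₁ C₂ : Finset (Rd d)} (h1 : C₁.Nonempty) (h2 : C₂.Nonempty) :
    ∃ C : Finset (Rd d), C.Nonempty ∧
      (C.card ≤ u * k^(d-1) * C₁.card + (k - u) * k^(d-1) * C₂.card) ∧
      Gq nrm φ M C ≤ ENNReal.ofReal ((u:ℝ)/k) * Gq nrm φ (M/k) C₁
        + ENNReal.ofReal (((k:ℝ)-(u:ℝ))/k) * Gq nrm φ (M/k) C₂ := by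
  classical
  have hk : 0 < k := hu.trans huk
  have hk0 : ((k:ℝ)) ≠ 0 := Nat.cast_ne_zero.2 hk.ne'
  set i0 : Fin d := ⟨0, hd⟩ with hi0
  set D : (Fin d → Fin k) → Finset (Rd d) :=
    fun v => if ((v i0 : Fin k) : ℕ) < u then C₁ else C₂ with hDdef
  have hD : ∀ v, (D v).Nonempty := by
    intro v
    by_cases hv : ((v i0 : Fin k) : ℕ) < u <;> simp [hDdef, hv, h1, h2]
  set T : (Fin d → Fin k) → Rd d → Rd d :=
    fun v y => (k:ℝ)⁻¹ • y + (k:ℝ)⁻¹ • (fun i => ((v i : ℕ) : ℝ)) with hT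
  set C : Finset (Rd d) :=
    Finset.univ.biUnion (fun v : Fin d → Fin k => (D v).image (T v)) with hCdef
  have hmem : ∀ v : Fin d → Fin k, ∀ y ∈ D v, T v y ∈ C := by
    intro v y hy
    exact Finset.mem_biUnion.2 ⟨v, Finset.mem_univ _, Finset.mem_image_of_mem _ hy⟩
  refine ⟨C, ?_, ?_, ?_⟩
  · obtain ⟨y, hy⟩ := hD (fun _ => ⟨0, hk⟩)
    exact ⟨T (fun _ => ⟨0, hk⟩) y, hmem (fun _ => ⟨0, hk⟩) y hy⟩
  · calc C.card ≤ ∑ v : Fin d → Fin k, ((D v).image (T v)).card := Finset.card_biUnion_le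
      _ ≤ ∑ v : Fin d → Fin k, (D v).card :=
          Finset.sum_le_sum fun v _ => Finset.card_image_le
      _ = ∑ v : Fin d → Fin k,
            (if ((v i0 : Fin k) : ℕ) < u then C₁.card else C₂.card) := by
          refine Finset.sum_congr rfl fun v _ => ?_
          by_cases hv : ((v i0 : Fin k) : ℕ) < u <;> simp [hDdef, hv]
      _ = u * k^(d-1) * C₁.card + (k - u) * k^(d-1) * C₂.card := by
          rw [sum_ite_slice hd huk]
          simp [smul_eq_mul]
  · have hcb := cell_bound hnrm hφ hM hk D hD C hmem
    refine hcb.trans (le_of_eq ?_)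
    have hsplit : ∀ v : Fin d → Fin k,
        ENNReal.ofReal (((k:ℝ)⁻¹) ^ d) * Gq nrm φ (M / k) (D v)
        = (if ((v i0 : Fin k) : ℕ) < u
            then ENNReal.ofReal (((k:ℝ)⁻¹) ^ d) * Gq nrm φ (M / k) C₁
            else ENNReal.ofReal (((k:ℝ)⁻¹) ^ d) * Gq nrm φ (M / k) C₂) := by
      intro v
      by_cases hv : ((v i0 : Fin k) : ℕ) < u <;> simp [hDdef, hv]
    rw [Finset.sum_congr rfl fun v _ => hsplit v, sum_ite_slice hd huk,
      nsmul_eq_mul, nsmul_eq_mul]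
    have hco : ∀ (m : ℕ) (G : ℝ≥0∞),
        ((m * k^(d-1) : ℕ) : ℝ≥0∞) * (ENNReal.ofReal (((k:ℝ)⁻¹) ^ d) * G)
        = ENNReal.ofReal ((m:ℝ)/k) * G := by
      intro m G
      rw [← mul_assoc]
      congr 1
      rw [← ENNReal.ofReal_natCast, ← ENNReal.ofReal_mul (by positivity)]
      congr 1
      push_cast
      rw [mul_assoc, pow_mul_inv_pow hd hk, div_eq_mul_inv]
    rw [hco u _, hco (k - u) _]
    congr 2
    rw [Nat.cast_sub huk.le]

/-! #### Analytic helper lemmas -/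

lemma exists_K (hd : 0 < d) {δ : ℝ} (hδ : 0 < δ) :
    ∃ K : ℕ, 1 ≤ K ∧ ∀ j : ℕ, K ≤ j → ((j:ℝ)+1)^d ≤ (1+δ) * (j:ℝ)^d := by
  have h1 : Filter.Tendsto (fun j : ℕ => 1 + 1/(j:ℝ)) Filter.atTop (nhds 1) := by
    have h0 := tendsto_one_div_atTop_nhds_zero_nat (𝕜 := ℝ)
    have := Filter.Tendsto.add (tendsto_const_nhds (x := (1:ℝ))) h0
    simpa using this
  have h2 : Filter.Tendsto (fun j : ℕ => (1 + 1/(j:ℝ))^d) Filter.atTop (nhds 1) := by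
    have := h1.pow d
    simpa using this
  have h3 : ∀ᶠ j : ℕ in Filter.atTop, (1 + 1/(j:ℝ))^d ≤ 1 + δ :=
    h2.eventually (eventually_le_nhds (by linarith))
  obtain ⟨K₀, hK₀⟩ := Filter.eventually_atTop.1 h3
  refine ⟨max K₀ 1, le_max_right _ _, fun j hj => ?_⟩
  have hj1 : 1 ≤ j := le_trans (le_max_right _ _) hj
  have hjR : (0:ℝ) < j := by exact_mod_cast hj1
  have hb := hK₀ j (le_trans (le_max_left _ _) hj)
  have he : ((j:ℝ)+1)^d = (1 + 1/(j:ℝ))^d * (j:ℝ)^d := by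
    rw [← mul_pow]
    congr 1
    field_simp
  rw [he]
  exact mul_le_mul_of_nonneg_right hb (by positivity)

lemma find_scale (hd : 0 < d) {m : ℝ} (hm : 0 < m) (c : ℝ) :
    ∃ n : ℕ, (c ≤ (n:ℝ)^d * m) ∧ ∀ j : ℕ, j < n → (j:ℝ)^d * m < c := by
  classical
  have hex : ∃ n : ℕ, c ≤ (n:ℝ)^d * m := by
    obtain ⟨n, hn⟩ := exists_nat_ge (max 1 (c / m))
    refine ⟨n, ?_⟩
    have h1 : (1:ℝ) ≤ n := le_trans (le_max_left _ _) hn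
    have h2 : c / m ≤ n := le_trans (le_max_right _ _) hn
    have h3 : (n:ℝ) ≤ (n:ℝ)^d := le_self_pow₀ (by linarith) hd.ne'
    calc c = (c/m) * m := by field_simp
      _ ≤ (n:ℝ) * m := mul_le_mul_of_nonneg_right h2 hm.le
      _ ≤ (n:ℝ)^d * m := mul_le_mul_of_nonneg_right h3 hm.le
  refine ⟨Nat.find hex, Nat.find_spec hex, fun j hj => ?_⟩
  have := Nat.find_min hex hj
  exact lt_of_not_ge this

lemma scale_bound (hd : 0 < d) {m c δ : ℝ} (hm : 0 < m) {K n : ℕ} (hK1 : 1 ≤ K)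
    (hK : ∀ j : ℕ, K ≤ j → ((j:ℝ)+1)^d ≤ (1+δ) * (j:ℝ)^d)
    (hc : (K:ℝ)^d * m < c)
    (hspec : c ≤ (n:ℝ)^d * m) (hmin : ∀ j : ℕ, j < n → (j:ℝ)^d * m < c) :
    (n:ℝ)^d * m ≤ (1+δ) * c := by
  have hnK : K < n := by
    by_contra h
    push_neg at h
    have h1 : (n:ℝ) ≤ K := by exact_mod_cast h
    have h2 : (n:ℝ)^d ≤ (K:ℝ)^d := pow_le_pow_left₀ (by positivity) h1 d
    have h3 : (n:ℝ)^d * m ≤ (K:ℝ)^d * m := mul_le_mul_of_nonneg_right h2 hm.le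
    linarith
  obtain ⟨j, rfl⟩ : ∃ j, n = j + 1 := ⟨n - 1, by omega⟩
  have hjK : K ≤ j := by omega
  have hj1 : 1 ≤ j := hK1.trans hjK
  have hjR : (0:ℝ) < j := by exact_mod_cast hj1
  have hjlt := hmin j (by omega)
  have hup := hK j hjK
  have h1δ : (0:ℝ) ≤ 1 + δ := by
    by_contra hcontra
    push_neg at hcontra
    nlinarith [pow_pos hjR d, pow_pos (show (0:ℝ) < (j:ℝ)+1 by linarith) d]
  have hcast : ((j+1 : ℕ):ℝ) = (j:ℝ) + 1 := by push_cast; ring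
  rw [hcast]
  calc ((j:ℝ)+1)^d * m ≤ ((1+δ) * (j:ℝ)^d) * m := mul_le_mul_of_nonneg_right hup hm.le
    _ = (1+δ) * ((j:ℝ)^d * m) := by ring
    _ ≤ (1+δ) * c := mul_le_mul_of_nonneg_left hjlt.le h1δ

lemma rpow_div_k (hd : 0 < d) {m : ℝ} (hm : 0 ≤ m) {k : ℕ} (hk : 0 < k) :
    (m / (k:ℝ)^d) ^ (1/(d:ℝ)) = m ^ (1/(d:ℝ)) / (k:ℝ) := by
  have hkR : (0:ℝ) < k := Nat.cast_pos.2 hk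
  have hd0 : (d:ℝ) ≠ 0 := Nat.cast_ne_zero.2 hd.ne'
  rw [Real.div_rpow hm (by positivity)]
  congr 1
  rw [← Real.rpow_natCast (k:ℝ) d, ← Real.rpow_mul hkR.le]
  rw [show (d:ℝ) * (1/(d:ℝ)) = 1 by field_simp, Real.rpow_one]

/-! #### Extraction of near-optimal codebooks -/

lemma exists_good (hnrm : IsNorm nrm) (hφ : PhiOK φ) {η : ℝ} (hη : 0 < η) {ε : ℝ}
    (hε : 0 < ε) :
    ∃ N : ℝ, 1 ≤ N ∧ ∃ C : Finset (Rd d), C.Nonempty ∧ (C.card : ℝ) ≤ N ∧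
      Gq nrm φ ((N/η)^(1/(d:ℝ))) C ≤ gq nrm φ η + ENNReal.ofReal ε := by
  set target : ℝ≥0∞ := gq nrm φ η + ENNReal.ofReal ε with htarget
  have hlt : gq nrm φ η < target :=
    ENNReal.lt_add_right (gq_ne_top hnrm hφ hη) (by simp [ENNReal.ofReal_eq_zero]; linarith)
  rw [gq_eq hη] at hlt
  obtain ⟨N, hN⟩ := iInf_lt_iff.1 hlt
  obtain ⟨hN1, h2⟩ := iInf_lt_iff.1 hN
  rw [fNq] at h2
  obtain ⟨C, h3⟩ := iInf_lt_iff.1 h2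
  obtain ⟨hCne, h4⟩ := iInf_lt_iff.1 h3
  obtain ⟨hCcard, h5⟩ := iInf_lt_iff.1 h4
  exact ⟨N, hN1, C, hCne, hCcard, h5.le⟩

/-! #### The key convexity inequality for rational weights -/

set_option maxHeartbeats 1600000 in
lemma key (hd : 0 < d) (hnrm : IsNorm nrm) (hφ : PhiOK φ)
    {η₁ η₂ η : ℝ} (hη₁ : 0 < η₁) (hη₂ : 0 < η₂)
    {u k₀ : ℕ} (hu : 0 < u) (huk : u < k₀)
    (hslt : (u:ℝ)/k₀ * η₁ + (1 - (u:ℝ)/k₀) * η₂ < η) {ε : ℝ} (hε : 0 < ε) :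
    gq nrm φ η ≤ ENNReal.ofReal ((u:ℝ)/k₀) * gq nrm φ η₁
      + ENNReal.ofReal (1 - (u:ℝ)/k₀) * gq nrm φ η₂ + ENNReal.ofReal ε := by
  classical
  have hk₀ : 0 < k₀ := hu.trans huk
  have hk₀R : (0:ℝ) < k₀ := Nat.cast_pos.2 hk₀
  set s : ℝ := (u:ℝ)/k₀ with hsdef
  have hs0 : 0 < s := by positivity
  have hs1 : s < 1 := by
    rw [hsdef, div_lt_one hk₀R]
    exact_mod_cast huk
  set w : ℝ := s * η₁ + (1 - s) * η₂ with hw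
  have hw0 : 0 < w :=
    add_pos (mul_pos hs0 hη₁) (mul_pos (by linarith) hη₂)
  have hη0 : 0 < η := hw0.trans hslt
  obtain ⟨N₁, hN₁, C₁, hC₁ne, hC₁card, hC₁⟩ := exists_good hnrm hφ hη₁ (half_pos hε)
  obtain ⟨N₂, hN₂, C₂, hC₂ne, hC₂card, hC₂⟩ := exists_good hnrm hφ hη₂ (half_pos hε)
  set m₁ : ℝ := N₁ / η₁ with hm₁
  set m₂ : ℝ := N₂ / η₂ with hm₂
  have hm₁0 : 0 < m₁ := div_pos (by linarith) hη₁
  have hm₂0 : 0 < m₂ := div_pos (by linarith) hη₂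
  set δ : ℝ := (η - w) / w with hδ
  have hδ0 : 0 < δ := div_pos (by linarith) hw0
  have hδw : (1 + δ) * w = η := by
    rw [hδ]
    field_simp
    ring
  obtain ⟨K, hK1, hK⟩ := exists_K hd hδ0
  set m' : ℝ := max ((K:ℝ)^d * m₁) ((K:ℝ)^d * m₂) + 1 with hm'
  have hm'₁ : (K:ℝ)^d * m₁ < m' := lt_of_le_of_lt (le_max_left _ _) (lt_add_one _)
  have hm'₂ : (K:ℝ)^d * m₂ < m' := lt_of_le_of_lt (le_max_right _ _) (lt_add_one _)
  have hKR : (0:ℝ) < K := Nat.cast_pos.2 hK1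
  have hm'0 : 0 < m' := lt_trans (by positivity) hm'₁
  obtain ⟨k₁, hk₁spec, hk₁min⟩ := find_scale hd hm₁0 m'
  obtain ⟨k₂, hk₂spec, hk₂min⟩ := find_scale hd hm₂0 m'
  have hk₁big : (k₁:ℝ)^d * m₁ ≤ (1+δ) * m' := scale_bound hd hm₁0 hK1 hK hm'₁ hk₁spec hk₁min
  have hk₂big : (k₂:ℝ)^d * m₂ ≤ (1+δ) * m' := scale_bound hd hm₂0 hK1 hK hm'₂ hk₂spec hk₂min
  have hk₁pos : 0 < k₁ := by
    rcases Nat.eq_zero_or_pos k₁ with h | h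
    · exfalso
      rw [h] at hk₁spec
      rw [Nat.cast_zero, zero_pow hd.ne', zero_mul] at hk₁spec
      linarith
    · exact h
  have hk₂pos : 0 < k₂ := by
    rcases Nat.eq_zero_or_pos k₂ with h | h
    · exfalso
      rw [h] at hk₂spec
      rw [Nat.cast_zero, zero_pow hd.ne', zero_mul] at hk₂spec
      linarith
    · exact h
  have hk₁R : (0:ℝ) < k₁ := Nat.cast_pos.2 hk₁pos
  have hk₂R : (0:ℝ) < k₂ := Nat.cast_pos.2 hk₂pos
  -- Step 1: tile each codebook up to the common level m'
  have hMnn : (0:ℝ) ≤ m' ^ (1/(d:ℝ)) := Real.rpow_nonneg hm'0.le _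
  obtain ⟨C₁', hC₁'ne, hC₁'card, hC₁'G⟩ := tile_bound hnrm hφ hMnn hk₁pos hC₁ne
  obtain ⟨C₂', hC₂'ne, hC₂'card, hC₂'G⟩ := tile_bound hnrm hφ hMnn hk₂pos hC₂ne
  have hstep1 : Gq nrm φ (m' ^ (1/(d:ℝ))) C₁' ≤ gq nrm φ η₁ + ENNReal.ofReal (ε/2) := by
    refine hC₁'G.trans (le_trans ?_ hC₁)
    have h1 : m' ^ (1/(d:ℝ)) / (k₁:ℝ) = (m' / (k₁:ℝ)^d) ^ (1/(d:ℝ)) :=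
      (rpow_div_k hd hm'0.le hk₁pos).symm
    rw [h1]
    refine Gq_mono hnrm hφ (Real.rpow_nonneg (by positivity) _) ?_ C₁
    refine Real.rpow_le_rpow (by positivity) ?_ (by positivity)
    rw [div_le_div_iff₀ (by positivity) hη₁]
    calc m' * η₁ ≤ ((k₁:ℝ)^d * m₁) * η₁ :=
          mul_le_mul_of_nonneg_right hk₁spec hη₁.le
      _ = N₁ * (k₁:ℝ)^d := by
          rw [hm₁]
          field_simp
  have hstep2 : Gq nrm φ (m' ^ (1/(d:ℝ))) C₂' ≤ gq nrm φ η₂ + ENNReal.ofReal (ε/2) := by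
    refine hC₂'G.trans (le_trans ?_ hC₂)
    have h1 : m' ^ (1/(d:ℝ)) / (k₂:ℝ) = (m' / (k₂:ℝ)^d) ^ (1/(d:ℝ)) :=
      (rpow_div_k hd hm'0.le hk₂pos).symm
    rw [h1]
    refine Gq_mono hnrm hφ (Real.rpow_nonneg (by positivity) _) ?_ C₂
    refine Real.rpow_le_rpow (by positivity) ?_ (by positivity)
    rw [div_le_div_iff₀ (by positivity) hη₂]
    calc m' * η₂ ≤ ((k₂:ℝ)^d * m₂) * η₂ :=
          mul_le_mul_of_nonneg_right hk₂spec hη₂.le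
      _ = N₂ * (k₂:ℝ)^d := by
          rw [hm₂]
          field_simp
  -- Step 2: mix the two tiled codebooks
  set M : ℝ := ((k₀:ℝ)^d * m') ^ (1/(d:ℝ)) with hM
  have hM0 : 0 ≤ M := Real.rpow_nonneg (by positivity) _
  obtain ⟨C, hCne, hCcard, hCG⟩ := mix_bound hd hnrm hφ hM0 hu huk hC₁'ne hC₂'ne
  have hMk₀ : M / (k₀:ℝ) = m' ^ (1/(d:ℝ)) := by
    rw [hM, ← rpow_div_k hd (by positivity : (0:ℝ) ≤ (k₀:ℝ)^d * m') hk₀]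
    congr 1
    field_simp
  rw [hMk₀] at hCG
  have hfinal1 : Gq nrm φ M C ≤ ENNReal.ofReal s * (gq nrm φ η₁ + ENNReal.ofReal (ε/2))
      + ENNReal.ofReal (1-s) * (gq nrm φ η₂ + ENNReal.ofReal (ε/2)) := by
    refine hCG.trans ?_
    have hco : ((k₀:ℝ) - (u:ℝ))/(k₀:ℝ) = 1 - s := by
      rw [hsdef]
      field_simp
    rw [hco]
    exact add_le_add (mul_le_mul_right hstep1 _) (mul_le_mul_right hstep2 _)
  -- Step 3: the number of points used
  set N : ℝ := (u:ℝ) * (k₀:ℝ)^(d-1) * ((k₁:ℝ)^d * N₁)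
      + ((k₀:ℝ) - (u:ℝ)) * (k₀:ℝ)^(d-1) * ((k₂:ℝ)^d * N₂) with hN
  have hk₀u : (0:ℝ) ≤ (k₀:ℝ) - (u:ℝ) := by
    have : (u:ℝ) ≤ (k₀:ℝ) := by exact_mod_cast huk.le
    linarith
  have hcard : (C.card : ℝ) ≤ N := by
    have hc₁ : ((C₁'.card : ℕ) : ℝ) ≤ (k₁:ℝ)^d * N₁ := by
      calc ((C₁'.card : ℕ) : ℝ) ≤ ((k₁^d * C₁.card : ℕ) : ℝ) := by exact_mod_cast hC₁'card
        _ = (k₁:ℝ)^d * (C₁.card : ℝ) := by push_cast; ring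
        _ ≤ (k₁:ℝ)^d * N₁ := mul_le_mul_of_nonneg_left hC₁card (by positivity)
    have hc₂ : ((C₂'.card : ℕ) : ℝ) ≤ (k₂:ℝ)^d * N₂ := by
      calc ((C₂'.card : ℕ) : ℝ) ≤ ((k₂^d * C₂.card : ℕ) : ℝ) := by exact_mod_cast hC₂'card
        _ = (k₂:ℝ)^d * (C₂.card : ℝ) := by push_cast; ring
        _ ≤ (k₂:ℝ)^d * N₂ := mul_le_mul_of_nonneg_left hC₂card (by positivity)
    calc (C.card : ℝ)
        ≤ ((u * k₀^(d-1) * C₁'.card + (k₀ - u) * k₀^(d-1) * C₂'.card : ℕ) : ℝ) := by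
          exact_mod_cast hCcard
      _ = (u:ℝ) * (k₀:ℝ)^(d-1) * (C₁'.card : ℝ)
          + ((k₀:ℝ) - (u:ℝ)) * (k₀:ℝ)^(d-1) * (C₂'.card : ℝ) := by
          push_cast [Nat.cast_sub huk.le]
          ring
      _ ≤ N := by
          rw [hN]
          refine add_le_add ?_ ?_
          · exact mul_le_mul_of_nonneg_left hc₁ (by positivity)
          · exact mul_le_mul_of_nonneg_left hc₂ (by positivity)
  have hN1 : 1 ≤ N := by
    have h1 : (1:ℝ) ≤ (C.card : ℝ) := by
      have := hCne.card_pos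
      exact_mod_cast this
    linarith
  set m'' : ℝ := (k₀:ℝ)^d * m' with hm''
  have hm''0 : 0 < m'' := by positivity
  have hNpos : 0 < N := by linarith
  set ηt : ℝ := N / m'' with hηt
  have hηt0 : 0 < ηt := by positivity
  have hηtle : ηt ≤ η := by
    rw [hηt, div_le_iff₀ hm''0]
    have e₁ : (k₁:ℝ)^d * N₁ = ((k₁:ℝ)^d * m₁) * η₁ := by
      rw [hm₁]
      field_simp
    have e₂ : (k₂:ℝ)^d * N₂ = ((k₂:ℝ)^d * m₂) * η₂ := by
      rw [hm₂]
      field_simp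
    have b₁ : (k₁:ℝ)^d * N₁ ≤ ((1+δ) * m') * η₁ := by
      rw [e₁]
      exact mul_le_mul_of_nonneg_right hk₁big hη₁.le
    have b₂ : (k₂:ℝ)^d * N₂ ≤ ((1+δ) * m') * η₂ := by
      rw [e₂]
      exact mul_le_mul_of_nonneg_right hk₂big hη₂.le
    have hk₀d : (k₀:ℝ)^d = (k₀:ℝ)^(d-1) * (k₀:ℝ) := by
      conv_lhs => rw [show d = (d-1)+1 by omega]
      rw [pow_succ]
    calc N ≤ (u:ℝ) * (k₀:ℝ)^(d-1) * (((1+δ)*m')*η₁)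
          + ((k₀:ℝ) - (u:ℝ)) * (k₀:ℝ)^(d-1) * (((1+δ)*m')*η₂) := by
          rw [hN]
          exact add_le_add (mul_le_mul_of_nonneg_left b₁ (by positivity))
            (mul_le_mul_of_nonneg_left b₂ (by positivity))
      _ = ((1+δ) * w) * m'' := by
          rw [hm'', hk₀d, hw, hsdef]
          field_simp
      _ = η * m'' := by rw [hδw]
  have hgη : gq nrm φ η ≤ Gq nrm φ M C := by
    have h1 : gq nrm φ η ≤ gq nrm φ ηt :=
      (gq_anti hnrm hφ) (Set.mem_Ioi.2 hηt0) (Set.mem_Ioi.2 hη0) hηtle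
    have h2 : gq nrm φ ηt ≤ fNq nrm φ N ηt := gq_le_fNq hηt0 hN1
    have h3 : fNq nrm φ N ηt ≤ Gq nrm φ ((N/ηt)^(1/(d:ℝ))) C := fNq_le_Gq hCne hcard
    have h4 : N / ηt = m'' := by
      rw [hηt]
      field_simp
    rw [h4] at h3
    exact h1.trans (h2.trans (h3.trans_eq (by rw [hM, hm''])))
  refine hgη.trans (hfinal1.trans ?_)
  rw [mul_add, mul_add]
  have hε2 : ENNReal.ofReal s * ENNReal.ofReal (ε/2)
      + ENNReal.ofReal (1-s) * ENNReal.ofReal (ε/2) ≤ ENNReal.ofReal ε := by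
    have hnn : (0:ℝ) ≤ (1-s) * (ε/2) := mul_nonneg (by linarith) (by linarith)
    rw [← ENNReal.ofReal_mul hs0.le, ← ENNReal.ofReal_mul (by linarith),
      ← ENNReal.ofReal_add (by positivity) hnn]
    refine ENNReal.ofReal_le_ofReal ?_
    have he : s * (ε/2) + (1-s) * (ε/2) = ε/2 := by ring
    linarith
  calc ENNReal.ofReal s * gq nrm φ η₁ + ENNReal.ofReal s * ENNReal.ofReal (ε/2)
      + (ENNReal.ofReal (1-s) * gq nrm φ η₂ + ENNReal.ofReal (1-s) * ENNReal.ofReal (ε/2))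
      = ENNReal.ofReal s * gq nrm φ η₁ + ENNReal.ofReal (1-s) * gq nrm φ η₂
        + (ENNReal.ofReal s * ENNReal.ofReal (ε/2)
          + ENNReal.ofReal (1-s) * ENNReal.ofReal (ε/2)) := by
        rw [add_add_add_comm]
    _ ≤ ENNReal.ofReal s * gq nrm φ η₁ + ENNReal.ofReal (1-s) * gq nrm φ η₂
        + ENNReal.ofReal ε := add_le_add_right hε2 _

end Stmt4


set_option maxHeartbeats 1600000 in
/-- `g` is finite-valued, nonincreasing and convex on `(0,∞)`. -/
theorem statement4 {d : ℕ} (hd : 0 < d)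
    (nrm : Rd d → ℝ) (hnrm : IsNorm nrm) (φ : ℝ → ℝ) (hφ : PhiOK φ) :
    (∀ η : ℝ, 0 < η → gq nrm φ η ≠ ⊤) ∧
    AntitoneOn (gq nrm φ) (Ioi 0) ∧
    (∀ η₁ ∈ Ioi (0:ℝ), ∀ η₂ ∈ Ioi (0:ℝ), ∀ a b : ℝ, 0 ≤ a → 0 ≤ b → a + b = 1 →
      gq nrm φ (a * η₁ + b * η₂) ≤
        ENNReal.ofReal a * gq nrm φ η₁ + ENNReal.ofReal b * gq nrm φ η₂) := by
  classical
  have hfin : ∀ η : ℝ, 0 < η → gq nrm φ η ≠ ⊤ := fun η hη => Stmt4.gq_ne_top hnrm hφ hη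
  refine ⟨hfin, Stmt4.gq_anti hnrm hφ, ?_⟩
  intro η₁ hη₁' η₂ hη₂' a b ha hb hab
  rw [Set.mem_Ioi] at hη₁' hη₂'
  by_cases ha0 : a = 0
  · subst ha0
    have hb1 : b = 1 := by linarith
    subst hb1
    simp
  by_cases hb0 : b = 0
  · subst hb0
    have ha1 : a = 1 := by linarith
    subst ha1
    simp
  have ha' : 0 < a := ha.lt_of_ne' ha0
  have hb' : 0 < b := hb.lt_of_ne' hb0
  have ha1 : a < 1 := by linarith
  by_cases hee : η₁ = η₂
  · subst hee
    have hcomb : a * η₁ + b * η₁ = η₁ := by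
      rw [← add_mul, hab, one_mul]
    rw [hcomb]
    refine le_of_eq ?_
    calc gq nrm φ η₁ = ENNReal.ofReal (a+b) * gq nrm φ η₁ := by
          rw [hab, ENNReal.ofReal_one, one_mul]
      _ = (ENNReal.ofReal a + ENNReal.ofReal b) * gq nrm φ η₁ := by
          rw [ENNReal.ofReal_add ha hb]
      _ = ENNReal.ofReal a * gq nrm φ η₁ + ENNReal.ofReal b * gq nrm φ η₁ := add_mul _ _ _
  -- main case
  set η : ℝ := a * η₁ + b * η₂ with hηdef
  have hη0 : 0 < η := add_pos (mul_pos ha' hη₁') (mul_pos hb' hη₂')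
  set G₁ : ℝ := (gq nrm φ η₁).toReal with hG₁
  set G₂ : ℝ := (gq nrm φ η₂).toReal with hG₂
  have hG₁0 : 0 ≤ G₁ := ENNReal.toReal_nonneg
  have hG₂0 : 0 ≤ G₂ := ENNReal.toReal_nonneg
  have hg₁ : gq nrm φ η₁ = ENNReal.ofReal G₁ := (ENNReal.ofReal_toReal (hfin _ hη₁')).symm
  have hg₂ : gq nrm φ η₂ = ENNReal.ofReal G₂ := (ENNReal.ofReal_toReal (hfin _ hη₂')).symm
  have main : (gq nrm φ η).toReal ≤ a * G₁ + b * G₂ := by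
    refine le_of_forall_pos_le_add fun ε' hε' => ?_
    set ε₂ : ℝ := ε' / (2 * (|G₁ - G₂| + 1)) with hε₂def
    have hε₂0 : 0 < ε₂ := by positivity
    have hsex : ∃ u k₀ : ℕ, 0 < u ∧ u < k₀ ∧ |(u:ℝ)/k₀ - a| ≤ ε₂ ∧
        (u:ℝ)/k₀ * η₁ + (1 - (u:ℝ)/k₀) * η₂ < η := by
      rcases lt_or_gt_of_ne hee with hlt | hgt
      · -- η₁ < η₂ : choose s ∈ (a, min 1 (a+ε₂))
        obtain ⟨q, hq1, hq2⟩ := exists_rat_btwn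
          (show a < min 1 (a+ε₂) from lt_min ha1 (by linarith))
        have hq0 : (0:ℚ) < q := by
          have : (0:ℝ) < (q:ℝ) := lt_trans ha' hq1
          exact_mod_cast this
        have hq1' : (q:ℝ) < 1 := lt_of_lt_of_le hq2 (min_le_left _ _)
        have hqlt1 : q < 1 := by exact_mod_cast hq1'
        have hnum : (0:ℤ) < q.num := Rat.num_pos.2 hq0
        have hqR : ((q.num.toNat : ℝ))/((q.den : ℕ):ℝ) = (q:ℝ) := by
          rw [Rat.cast_def]
          congr 1
          rw [← Int.cast_natCast, Int.toNat_of_nonneg hnum.le]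
        refine ⟨q.num.toNat, q.den, ?_, ?_, ?_, ?_⟩
        · omega
        · have := (Rat.lt_one_iff_num_lt_denom).2 hqlt1
          omega
        · rw [hqR, abs_le]
          have hq2' : (q:ℝ) < a + ε₂ := lt_of_lt_of_le hq2 (min_le_right _ _)
          constructor <;> [linarith; linarith]
        · rw [hqR]
          have hbeq : b = 1 - a := by linarith
          have heq : (q:ℝ) * η₁ + (1 - (q:ℝ)) * η₂ - (a * η₁ + b * η₂)
              = ((q:ℝ) - a) * (η₁ - η₂) := by rw [hbeq]; ring
          have hneg : ((q:ℝ) - a) * (η₁ - η₂) < 0 :=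
            mul_neg_of_pos_of_neg (by linarith) (by linarith)
          have : (q:ℝ) * η₁ + (1 - (q:ℝ)) * η₂ < a * η₁ + b * η₂ := by linarith
          linarith
      · -- η₂ < η₁ : choose s ∈ (max 0 (a-ε₂), a)
        obtain ⟨q, hq1, hq2⟩ := exists_rat_btwn
          (show max 0 (a-ε₂) < a from max_lt ha' (by linarith))
        have hq0 : (0:ℚ) < q := by
          have : (0:ℝ) < (q:ℝ) := lt_of_le_of_lt (le_max_left _ _) hq1
          exact_mod_cast this
        have hq1' : (q:ℝ) < 1 := lt_trans hq2 ha1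
        have hqlt1 : q < 1 := by exact_mod_cast hq1'
        have hnum : (0:ℤ) < q.num := Rat.num_pos.2 hq0
        have hqR : ((q.num.toNat : ℝ))/((q.den : ℕ):ℝ) = (q:ℝ) := by
          rw [Rat.cast_def]
          congr 1
          rw [← Int.cast_natCast, Int.toNat_of_nonneg hnum.le]
        refine ⟨q.num.toNat, q.den, ?_, ?_, ?_, ?_⟩
        · omega
        · have := (Rat.lt_one_iff_num_lt_denom).2 hqlt1
          omega
        · rw [hqR, abs_le]
          have hq1'' : a - ε₂ < (q:ℝ) := lt_of_le_of_lt (le_max_right _ _) hq1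
          constructor <;> [linarith; linarith]
        · rw [hqR]
          have hbeq : b = 1 - a := by linarith
          have heq : (q:ℝ) * η₁ + (1 - (q:ℝ)) * η₂ - (a * η₁ + b * η₂)
              = ((q:ℝ) - a) * (η₁ - η₂) := by rw [hbeq]; ring
          have hneg : ((q:ℝ) - a) * (η₁ - η₂) < 0 :=
            mul_neg_of_neg_of_pos (by linarith) (by linarith)
          have : (q:ℝ) * η₁ + (1 - (q:ℝ)) * η₂ < a * η₁ + b * η₂ := by linarith
          linarith
    obtain ⟨u, k₀, hu, huk, hclose, hslt⟩ := hsex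
    have hkey := Stmt4.key hd hnrm hφ hη₁' hη₂' hu huk hslt (half_pos hε')
    set s : ℝ := (u:ℝ)/k₀ with hsdef
    have hk₀R : (0:ℝ) < (k₀:ℝ) := Nat.cast_pos.2 (hu.trans huk)
    have hs0 : 0 ≤ s := by positivity
    have hs1 : s ≤ 1 := by
      rw [hsdef, div_le_one hk₀R]
      exact_mod_cast huk.le
    have hRne : ENNReal.ofReal s * gq nrm φ η₁ + ENNReal.ofReal (1-s) * gq nrm φ η₂
        + ENNReal.ofReal (ε'/2) ≠ ⊤ := by
      refine ENNReal.add_ne_top.2 ⟨ENNReal.add_ne_top.2 ⟨?_, ?_⟩, ENNReal.ofReal_ne_top⟩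
      · exact ENNReal.mul_ne_top ENNReal.ofReal_ne_top (hfin _ hη₁')
      · exact ENNReal.mul_ne_top ENNReal.ofReal_ne_top (hfin _ hη₂')
    have hmono := ENNReal.toReal_mono hRne hkey
    have hR : (ENNReal.ofReal s * gq nrm φ η₁ + ENNReal.ofReal (1-s) * gq nrm φ η₂
        + ENNReal.ofReal (ε'/2)).toReal = s * G₁ + (1-s) * G₂ + ε'/2 := by
      rw [ENNReal.toReal_add (ENNReal.add_ne_top.2
          ⟨ENNReal.mul_ne_top ENNReal.ofReal_ne_top (hfin _ hη₁'),
           ENNReal.mul_ne_top ENNReal.ofReal_ne_top (hfin _ hη₂')⟩) ENNReal.ofReal_ne_top,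
        ENNReal.toReal_add (ENNReal.mul_ne_top ENNReal.ofReal_ne_top (hfin _ hη₁'))
          (ENNReal.mul_ne_top ENNReal.ofReal_ne_top (hfin _ hη₂')),
        ENNReal.toReal_mul, ENNReal.toReal_mul, ENNReal.toReal_ofReal hs0,
        ENNReal.toReal_ofReal (by linarith : (0:ℝ) ≤ 1 - s),
        ENNReal.toReal_ofReal (by linarith : (0:ℝ) ≤ ε'/2)]
    rw [hR] at hmono
    have habs : s * G₁ + (1-s) * G₂ ≤ a * G₁ + b * G₂ + ε₂ * |G₁ - G₂| := by
      have hbeq : b = 1 - a := by linarith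
      have heq : s * G₁ + (1-s) * G₂ - (a * G₁ + b * G₂) = (s - a) * (G₁ - G₂) := by
        rw [hbeq]
        ring
      have h2 : (s-a)*(G₁-G₂) ≤ |s-a| * |G₁-G₂| := by
        calc (s-a)*(G₁-G₂) ≤ |(s-a)*(G₁-G₂)| := le_abs_self _
          _ = |s-a| * |G₁-G₂| := abs_mul _ _
      have h3 : |s-a| * |G₁-G₂| ≤ ε₂ * |G₁-G₂| :=
        mul_le_mul_of_nonneg_right hclose (abs_nonneg _)
      linarith
    have hε₂abs : ε₂ * |G₁ - G₂| ≤ ε'/2 := by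
      have hA : (0:ℝ) ≤ |G₁ - G₂| := abs_nonneg _
      have h1 : ε₂ * |G₁ - G₂| ≤ ε₂ * (|G₁ - G₂| + 1) :=
        mul_le_mul_of_nonneg_left (by linarith) hε₂0.le
      have h2 : ε₂ * (|G₁ - G₂| + 1) = ε'/2 := by
        rw [hε₂def]
        field_simp
      linarith
    linarith
  calc gq nrm φ η = ENNReal.ofReal ((gq nrm φ η).toReal) :=
        (ENNReal.ofReal_toReal (hfin η hη0)).symm
    _ ≤ ENNReal.ofReal (a * G₁ + b * G₂) := ENNReal.ofReal_le_ofReal main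
    _ ≤ ENNReal.ofReal (a * G₁) + ENNReal.ofReal (b * G₂) := ENNReal.ofReal_add_le
    _ = ENNReal.ofReal a * gq nrm φ η₁ + ENNReal.ofReal b * gq nrm φ η₂ := by
        rw [ENNReal.ofReal_mul ha, ENNReal.ofReal_mul hb, hg₁, hg₂]


end
end

section
/- The function g satisfies lim_{η→∞} g(η) = 0 and lim_{η↓0} g(η) = sup_{t≥0} φ(t) (the latter limit taken in [0,∞]). -/
open MeasureTheory Filter Set
open scoped ENNReal NNReal

noncomputable section

lemma myNrmZero {d : ℕ} {nrm : Rd d → ℝ} (h : IsNorm nrm) : nrm 0 = 0 := (h.2.1 0).2 rfl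

lemma myNrmLe {d : ℕ} {nrm : Rd d → ℝ} (h : IsNorm nrm) (x : Rd d) :
    nrm x ≤ (∑ i, nrm (Pi.single i 1)) * ‖x‖ := by
  have h1 : nrm x = nrm (∑ i, Pi.single i (x i)) := by rw [Finset.univ_sum_single]
  rw [h1]
  calc nrm (∑ i, Pi.single i (x i)) ≤ ∑ i, nrm (Pi.single i (x i)) :=
        Finset.le_sum_of_subadditive nrm (myNrmZero h).le h.2.2.2 _ _
    _ ≤ ∑ i, nrm (Pi.single i 1) * ‖x‖ := by
        refine Finset.sum_le_sum fun i _ => ?_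
        have h2 : Pi.single i (x i) = (x i) • (Pi.single i (1:ℝ) : Rd d) := by
          ext j
          rcases eq_or_ne j i with rfl | hj
          · simp
          · simp [Pi.single_apply, hj]
        rw [h2, h.2.2.1]
        have hxi : |x i| ≤ ‖x‖ := by simpa using norm_le_pi_norm x i
        calc |x i| * nrm (Pi.single i 1) ≤ ‖x‖ * nrm (Pi.single i 1) :=
              mul_le_mul_of_nonneg_right hxi (h.1 _)
          _ = nrm (Pi.single i 1) * ‖x‖ := mul_comm _ _
    _ = (∑ i, nrm (Pi.single i 1)) * ‖x‖ := by rw [Finset.sum_mul]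

lemma myNrmCont {d : ℕ} {nrm : Rd d → ℝ} (h : IsNorm nrm) : Continuous nrm := by
  have hK0 : 0 ≤ ∑ i, nrm (Pi.single i (1:ℝ)) := Finset.sum_nonneg fun i _ => h.1 _
  have hlip : LipschitzWith ⟨_, hK0⟩ nrm := by
    apply LipschitzWith.of_dist_le_mul
    intro x y
    rw [Real.dist_eq, dist_eq_norm]
    change |nrm x - nrm y| ≤ (∑ i, nrm (Pi.single i (1:ℝ))) * ‖x - y‖
    rw [abs_sub_le_iff]
    have tri : ∀ a b : Rd d, nrm a ≤ nrm b + nrm (a - b) := by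
      intro a b
      have := h.2.2.2 b (a - b)
      simpa using this
    have hxy := myNrmLe h (x - y)
    have hyx := myNrmLe h (y - x)
    rw [norm_sub_rev] at hyx
    constructor
    · linarith [tri x y]
    · linarith [tri y x]
  exact hlip.continuous

/-- `lim_{η→∞} g(η) = 0` and `lim_{η↓0} g(η) = sup_{t ≥ 0} φ(t)` (in `[0,∞]`). -/
theorem statement5 {d : ℕ} (hd : 0 < d)
    (nrm : Rd d → ℝ) (hnrm : IsNorm nrm) (φ : ℝ → ℝ) (hφ : PhiOK φ) :
    Tendsto (gq nrm φ) atTop (nhds 0) ∧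
    Tendsto (gq nrm φ) (nhdsWithin 0 (Ioi 0))
      (nhds (⨆ t ∈ Ici (0:ℝ), ENNReal.ofReal (φ t))) := by
  obtain ⟨hmono, hpos, _hleft, hzero, t₀, ht₀, hφt₀⟩ := hφ
  haveI : Nonempty (Fin d) := ⟨⟨0, hd⟩⟩
  have hd' : (d:ℝ) ≠ 0 := Nat.cast_ne_zero.2 hd.ne'
  have hn0 := hnrm.1
  have hneq := hnrm.2.1
  have hnsmul := hnrm.2.2.1
  have hntri := hnrm.2.2.2
  set K := ∑ i, nrm (Pi.single i (1:ℝ)) with hKdef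
  have hK0 : 0 ≤ K := Finset.sum_nonneg fun i _ => hn0 _
  have hKle : ∀ x, nrm x ≤ K * ‖x‖ := myNrmLe hnrm
  have hcont : Continuous nrm := myNrmCont hnrm
  -- strict positivity of K
  have hKpos : 0 < K := by
    have h1 : (Pi.single (⟨0, hd⟩ : Fin d) (1:ℝ) : Rd d) ≠ 0 := by
      intro h
      have := congrFun h (⟨0, hd⟩ : Fin d)
      simp at this
    have h2 : 0 < nrm (Pi.single (⟨0, hd⟩ : Fin d) (1:ℝ)) :=
      lt_of_le_of_ne (hn0 _) fun h => h1 ((hneq _).1 h.symm)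
    exact Finset.sum_pos' (fun i _ => hn0 _) ⟨_, Finset.mem_univ (⟨0, hd⟩ : Fin d), h2⟩
  -- lower norm-equivalence constant
  obtain ⟨c, hc, hclow⟩ : ∃ c : ℝ, 0 < c ∧ ∀ x, c * ‖x‖ ≤ nrm x := by
    obtain ⟨z, hz, hzmin⟩ := (isCompact_sphere (0 : Rd d) 1).exists_isMinOn
      (NormedSpace.sphere_nonempty.2 zero_le_one) hcont.continuousOn
    have hz1 : ‖z‖ = 1 := by simpa using mem_sphere_iff_norm.1 hz
    have hzne : z ≠ 0 := by
      intro h; rw [h] at hz1; simp at hz1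
    refine ⟨nrm z, lt_of_le_of_ne (hn0 _) fun h => hzne ((hneq _).1 h.symm), fun x => ?_⟩
    rcases eq_or_ne x 0 with rfl | hx
    · simp [myNrmZero hnrm]
    · have hxn : 0 < ‖x‖ := norm_pos_iff.2 hx
      have hmem : ‖x‖⁻¹ • x ∈ Metric.sphere (0 : Rd d) 1 := by
        simp [norm_smul, abs_of_pos (inv_pos.2 hxn), inv_mul_cancel₀ hxn.ne']
      have hmin : nrm z ≤ nrm (‖x‖⁻¹ • x) := hzmin hmem
      have h2 : nrm (‖x‖⁻¹ • x) = ‖x‖⁻¹ * nrm x := by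
        rw [hnsmul, abs_of_pos (inv_pos.2 hxn)]
      rw [h2] at hmin
      have h3 := mul_le_mul_of_nonneg_left hmin hxn.le
      calc nrm z * ‖x‖ = ‖x‖ * nrm z := mul_comm _ _
        _ ≤ ‖x‖ * (‖x‖⁻¹ * nrm x) := h3
        _ = nrm x := by field_simp
  set B := volume (Metric.closedBall (0 : Rd d) 1) with hBdef
  have hB : B ≠ ⊤ := (isCompact_closedBall _ _).measure_lt_top.ne
  have hcubeM : MeasurableSet (unitCube d) :=
    MeasurableSet.univ_pi fun _ => measurableSet_Ico
  have hcubevol : volume (unitCube d) = 1 := by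
    rw [unitCube, volume_pi_pi]; simp
  have hcubenorm : ∀ x ∈ unitCube d, ‖x‖ ≤ 1 := by
    intro x hx
    rw [pi_norm_le_iff_of_nonneg zero_le_one]
    intro i
    have h1 := hx i (mem_univ i)
    rw [Real.norm_eq_abs, abs_le]
    exact ⟨by linarith [h1.1], h1.2.le⟩
  -- dSet basic facts
  have hdnonneg : ∀ (x : Rd d) (A : Set (Rd d)), 0 ≤ dSet nrm x A := by
    intro x A
    exact Real.sInf_nonneg fun v ⟨y, _, hy⟩ => hy ▸ hn0 _
  have hdmem : ∀ (C : Finset (Rd d)), C.Nonempty → ∀ x : Rd d,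
      ∃ y ∈ C, dSet nrm x (C : Set (Rd d)) = nrm (x - y) := by
    intro C hC x
    have hne : ((fun y => nrm (x - y)) '' (C : Set (Rd d))).Nonempty :=
      (hC.to_set).image _
    have hfin : ((fun y => nrm (x - y)) '' (C : Set (Rd d))).Finite :=
      C.finite_toSet.image _
    obtain ⟨y, hyC, hval⟩ := hne.csInf_mem hfin
    exact ⟨y, hyC, hval.symm⟩
  have hdle : ∀ (C : Finset (Rd d)) (x y : Rd d), y ∈ C →
      dSet nrm x (C : Set (Rd d)) ≤ nrm (x - y) := by
    intro C x y hy
    exact csInf_le (C.finite_toSet.image _).bddBelow ⟨y, hy, rfl⟩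
  -- continuity of x ↦ dSet nrm x C
  have hdcont : ∀ (C : Finset (Rd d)), C.Nonempty →
      Continuous fun x => dSet nrm x (C : Set (Rd d)) := by
    intro C hC
    have key : ∀ x x' : Rd d, dSet nrm x (C : Set (Rd d)) ≤
        nrm (x - x') + dSet nrm x' (C : Set (Rd d)) := by
      intro x x'
      obtain ⟨y, hyC, hy⟩ := hdmem C hC x'
      calc dSet nrm x (C : Set (Rd d)) ≤ nrm (x - y) := hdle C x y hyC
        _ ≤ nrm (x - x') + nrm (x' - y) := by
            have h1 := hntri (x - x') (x' - y)
            simpa using h1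
        _ = nrm (x - x') + dSet nrm x' (C : Set (Rd d)) := by rw [hy]
    have hlip : LipschitzWith ⟨K, hK0⟩ (fun x => dSet nrm x (C : Set (Rd d))) := by
      apply LipschitzWith.of_dist_le_mul
      intro x y
      rw [Real.dist_eq, dist_eq_norm]
      change |dSet nrm x (C : Set (Rd d)) - dSet nrm y (C : Set (Rd d))| ≤ K * ‖x - y‖
      rw [abs_sub_le_iff]
      have h1 := key x y
      have h2 := key y x
      have h3 := hKle (x - y)
      have h4 := hKle (y - x)
      rw [norm_sub_rev] at h4
      constructor <;> linarith
    exact hlip.continuous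
  -- geometric covering bound
  have hvol : ∀ (C : Finset (Rd d)), C.Nonempty → ∀ r : ℝ, 0 ≤ r →
      volume {x : Rd d | dSet nrm x (C : Set (Rd d)) ≤ r} ≤
        (C.card : ℝ≥0∞) * (ENNReal.ofReal ((r / c) ^ d) * B) := by
    intro C hC r hr
    have hsub : {x : Rd d | dSet nrm x (C : Set (Rd d)) ≤ r} ⊆
        ⋃ y ∈ C, Metric.closedBall y (r / c) := by
      intro x hx
      obtain ⟨y, hyC, hy⟩ := hdmem C hC x
      refine mem_iUnion₂.2 ⟨y, hyC, ?_⟩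
      have h1 : nrm (x - y) ≤ r := hy ▸ hx
      have h2 := hclow (x - y)
      have h3 : ‖x - y‖ ≤ r / c := by
        rw [le_div_iff₀ hc]
        nlinarith
      simpa [Metric.mem_closedBall, dist_eq_norm] using h3
    calc volume {x : Rd d | dSet nrm x (C : Set (Rd d)) ≤ r}
        ≤ volume (⋃ y ∈ C, Metric.closedBall y (r / c)) := measure_mono hsub
      _ ≤ ∑ y ∈ C, volume (Metric.closedBall y (r / c)) := measure_biUnion_finset_le C _
      _ = ∑ _y ∈ C, ENNReal.ofReal ((r / c) ^ d) * B := by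
          refine Finset.sum_congr rfl fun y _ => ?_
          rw [Measure.addHaar_closedBall _ _ (by positivity)]
          simp [hBdef]
      _ = (C.card : ℝ≥0∞) * (ENNReal.ofReal ((r / c) ^ d) * B) := by
          rw [Finset.sum_const, nsmul_eq_mul]
  -- key lower estimate
  have hkey : ∀ t : ℝ, 0 < t → ∀ η : ℝ, 0 < η → ∀ N : ℝ, 1 ≤ N →
      ∀ (C : Finset (Rd d)), C.Nonempty → (C.card : ℝ) ≤ N →
      ENNReal.ofReal (φ t) * (1 - ENNReal.ofReal (η * (t / c) ^ d) * B) ≤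
        ∫⁻ x in unitCube d,
          ENNReal.ofReal (φ ((N / η) ^ (1 / (d:ℝ)) * dSet nrm x (C : Set (Rd d)))) ∂volume := by
    intro t ht η hη N hN C hC hcard
    set s := (N / η) ^ (1 / (d:ℝ)) with hs
    have hNpos : 0 < N := lt_of_lt_of_le one_pos hN
    have hspos : 0 < s := Real.rpow_pos_of_pos (div_pos hNpos hη) _
    set r := t / s with hrdef
    have hrpos : 0 < r := div_pos ht hspos
    set S := unitCube d ∩ {x : Rd d | r ≤ dSet nrm x (C : Set (Rd d))} with hSdef
    have hSM : MeasurableSet S :=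
      hcubeM.inter ((isClosed_le continuous_const (hdcont C hC)).measurableSet)
    have hvolS : 1 - ENNReal.ofReal (η * (t / c) ^ d) * B ≤ volume S := by
      rw [tsub_le_iff_right]
      have h1 : volume (unitCube d) ≤
          volume S + volume {x : Rd d | dSet nrm x (C : Set (Rd d)) ≤ r} := by
        refine le_trans (measure_mono ?_) (measure_union_le _ _)
        intro x hx
        rcases le_or_gt r (dSet nrm x (C : Set (Rd d))) with h | h
        · exact Or.inl ⟨hx, h⟩
        · exact Or.inr h.le
      have h2 : volume {x : Rd d | dSet nrm x (C : Set (Rd d)) ≤ r} ≤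
          ENNReal.ofReal (η * (t / c) ^ d) * B := by
        refine le_trans (hvol C hC r hrpos.le) ?_
        rw [← mul_assoc]
        refine mul_le_mul_left ?_ B
        rw [show ((C.card : ℝ≥0∞)) = ENNReal.ofReal (C.card : ℝ) by simp,
          ← ENNReal.ofReal_mul (Nat.cast_nonneg _)]
        apply ENNReal.ofReal_le_ofReal
        have hsd : s ^ d = N / η := by
          rw [hs, ← Real.rpow_natCast ((N / η) ^ (1 / (d:ℝ))) d,
            ← Real.rpow_mul (by positivity), one_div, inv_mul_cancel₀ hd', Real.rpow_one]
        have h3 : (C.card : ℝ) * (r / c) ^ d ≤ N * (r / c) ^ d :=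
          mul_le_mul_of_nonneg_right hcard (by positivity)
        refine le_trans h3 (le_of_eq ?_)
        rw [hrdef, div_div, div_pow, mul_pow, hsd, div_pow]
        field_simp
      calc 1 = volume (unitCube d) := hcubevol.symm
        _ ≤ volume S + volume {x : Rd d | dSet nrm x (C : Set (Rd d)) ≤ r} := h1
        _ ≤ volume S + ENNReal.ofReal (η * (t / c) ^ d) * B := by gcongr
    have hpoint : ∀ x ∈ S, ENNReal.ofReal (φ t) ≤
        ENNReal.ofReal (φ (s * dSet nrm x (C : Set (Rd d)))) := by
      intro x hx
      apply ENNReal.ofReal_le_ofReal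
      have hdx := hdnonneg x (C : Set (Rd d))
      refine hmono (mem_Ici.2 ht.le) (mem_Ici.2 (by positivity)) ?_
      have h1 : r ≤ dSet nrm x (C : Set (Rd d)) := hx.2
      calc t = s * r := by rw [hrdef]; field_simp
        _ ≤ s * dSet nrm x (C : Set (Rd d)) := mul_le_mul_of_nonneg_left h1 hspos.le
    calc ENNReal.ofReal (φ t) * (1 - ENNReal.ofReal (η * (t / c) ^ d) * B)
        ≤ ENNReal.ofReal (φ t) * volume S := by gcongr
      _ = ∫⁻ _x in S, ENNReal.ofReal (φ t) ∂volume := by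
          rw [setLIntegral_const, mul_comm]
      _ ≤ ∫⁻ x in S, ENNReal.ofReal (φ (s * dSet nrm x (C : Set (Rd d)))) ∂volume :=
          lintegral_mono_ae ((ae_restrict_iff' hSM).2 (ae_of_all _ hpoint))
      _ ≤ ∫⁻ x in unitCube d,
            ENNReal.ofReal (φ (s * dSet nrm x (C : Set (Rd d)))) ∂volume :=
          lintegral_mono_set inter_subset_left
  -- lower bound on gq
  have hglow : ∀ t : ℝ, 0 < t → ∀ η : ℝ, 0 < η →
      ENNReal.ofReal (φ t) * (1 - ENNReal.ofReal (η * (t / c) ^ d) * B) ≤ gq nrm φ η := by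
    intro t ht η hη
    rw [gq, if_pos hη]
    refine le_iInf₂ fun N hN => ?_
    rw [fNq]
    refine le_iInf fun C => le_iInf fun hC => le_iInf fun hcard => ?_
    exact hkey t ht η hη N (mem_Ici.1 hN) C hC hcard
  -- fNq with the single codebook {0}
  have hfN1 : ∀ η : ℝ, fNq nrm φ 1 η ≤
      ∫⁻ x in unitCube d, ENNReal.ofReal (φ ((1 / η) ^ (1 / (d:ℝ)) * nrm x)) ∂volume := by
    intro η
    rw [fNq]
    have h1 : ({0} : Finset (Rd d)).Nonempty := ⟨0, Finset.mem_singleton_self 0⟩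
    refine le_trans (iInf_le _ ({0} : Finset (Rd d))) ?_
    refine le_trans (iInf_le _ h1) ?_
    refine le_trans (iInf_le _ (by simp)) ?_
    apply le_of_eq
    refine lintegral_congr fun x => ?_
    have h2 : dSet nrm x ((({0} : Finset (Rd d))) : Set (Rd d)) = nrm x := by
      rw [dSet]
      simp
    rw [h2]
  set L := ⨆ t ∈ Ici (0:ℝ), ENNReal.ofReal (φ t) with hLdef
  -- upper bound on gq
  have hgub : ∀ η : ℝ, 0 < η → gq nrm φ η ≤ L := by
    intro η hη
    rw [gq, if_pos hη]
    refine le_trans (iInf₂_le (1:ℝ) (mem_Ici.2 le_rfl)) ?_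
    refine le_trans (hfN1 η) ?_
    calc ∫⁻ x in unitCube d, ENNReal.ofReal (φ ((1 / η) ^ (1 / (d:ℝ)) * nrm x)) ∂volume
        ≤ ∫⁻ _x in unitCube d, L ∂volume := by
          refine lintegral_mono fun x => ?_
          exact le_iSup₂ (f := fun t (_ : t ∈ Ici (0:ℝ)) => ENNReal.ofReal (φ t))
            ((1 / η) ^ (1 / (d:ℝ)) * nrm x)
            (mem_Ici.2 (mul_nonneg (Real.rpow_nonneg (by positivity) _) (hn0 x)))
      _ = L := by rw [setLIntegral_const, hcubevol, mul_one]
  constructor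
  · -- η → ∞
    have harg : Tendsto (fun η : ℝ => η ^ (-(1 / (d:ℝ))) * K) atTop (nhdsWithin 0 (Ioi 0)) := by
      apply tendsto_nhdsWithin_of_tendsto_nhds_of_eventually_within
      · have h1 := (tendsto_rpow_neg_atTop (by positivity : (0:ℝ) < 1 / (d:ℝ))).mul_const K
        simpa using h1
      · filter_upwards [eventually_gt_atTop (0:ℝ)] with η hη
        exact mul_pos (Real.rpow_pos_of_pos hη _) hKpos
    have hφarg : Tendsto (fun η : ℝ => ENNReal.ofReal (φ (η ^ (-(1 / (d:ℝ))) * K)))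
        atTop (nhds 0) := by
      have h1 := ENNReal.tendsto_ofReal (hzero.comp harg)
      simpa using h1
    apply tendsto_of_tendsto_of_tendsto_of_le_of_le' tendsto_const_nhds hφarg
    · exact Eventually.of_forall fun η => zero_le
    · filter_upwards [eventually_gt_atTop (0:ℝ)] with η hη
      rw [gq, if_pos hη]
      refine le_trans (iInf₂_le (1:ℝ) (mem_Ici.2 le_rfl)) ?_
      refine le_trans (hfN1 η) ?_
      have hrw : (1 / η) ^ (1 / (d:ℝ)) = η ^ (-(1 / (d:ℝ))) := by
        rw [one_div, Real.inv_rpow hη.le, ← Real.rpow_neg hη.le]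
      calc ∫⁻ x in unitCube d, ENNReal.ofReal (φ ((1 / η) ^ (1 / (d:ℝ)) * nrm x)) ∂volume
          ≤ ∫⁻ _x in unitCube d, ENNReal.ofReal (φ ((1 / η) ^ (1 / (d:ℝ)) * K)) ∂volume := by
            refine lintegral_mono_ae ((ae_restrict_iff' hcubeM).2 (ae_of_all _ fun x hx => ?_))
            apply ENNReal.ofReal_le_ofReal
            have ha : (0:ℝ) ≤ (1 / η) ^ (1 / (d:ℝ)) := Real.rpow_nonneg (by positivity) _
            refine hmono (mem_Ici.2 (mul_nonneg ha (hn0 x))) (mem_Ici.2 (mul_nonneg ha hK0)) ?_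
            refine mul_le_mul_of_nonneg_left ?_ ha
            calc nrm x ≤ K * ‖x‖ := hKle x
              _ ≤ K * 1 := mul_le_mul_of_nonneg_left (hcubenorm x hx) hK0
              _ = K := mul_one K
        _ = ENNReal.ofReal (φ ((1 / η) ^ (1 / (d:ℝ)) * K)) := by
            rw [setLIntegral_const, hcubevol, mul_one]
        _ = ENNReal.ofReal (φ (η ^ (-(1 / (d:ℝ))) * K)) := by rw [hrw]
  · -- η → 0⁺
    have hφ0 : φ 0 = 0 := by
      have h1 : ∀ᶠ s in nhdsWithin (0:ℝ) (Ioi 0), φ 0 ≤ φ s := by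
        filter_upwards [eventually_mem_nhdsWithin] with s hs
        exact hmono (mem_Ici.2 le_rfl) (mem_Ici.2 (le_of_lt hs)) (le_of_lt hs)
      exact le_antisymm (ge_of_tendsto hzero h1) (hpos 0 le_rfl)
    apply tendsto_order.2
    constructor
    · intro a ha
      obtain ⟨t, ht, hta⟩ : ∃ t : ℝ, t ∈ Ici (0:ℝ) ∧ a < ENNReal.ofReal (φ t) := by
        obtain ⟨t, hlt⟩ := lt_iSup_iff.1 ha
        obtain ⟨ht, hlt2⟩ := lt_iSup_iff.1 hlt
        exact ⟨t, ht, hlt2⟩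
      have ht0 : 0 < t := by
        rcases (mem_Ici.1 ht).lt_or_eq with h | h
        · exact h
        · exfalso
          rw [← h, hφ0] at hta
          simp at hta
      have htend : Tendsto
          (fun η : ℝ => ENNReal.ofReal (φ t) * (1 - ENNReal.ofReal (η * (t / c) ^ d) * B))
          (nhdsWithin 0 (Ioi 0)) (nhds (ENNReal.ofReal (φ t))) := by
        have h1 : Tendsto (fun η : ℝ => ENNReal.ofReal (η * (t / c) ^ d))
            (nhdsWithin 0 (Ioi 0)) (nhds 0) := by
          have h0 : Tendsto (fun η : ℝ => η * (t / c) ^ d) (nhds 0) (nhds 0) := by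
            have h00 := (continuous_id.mul (continuous_const (y := (t / c) ^ d))).tendsto (0:ℝ)
            simpa [Pi.mul_def] using h00
          have h2 := ENNReal.tendsto_ofReal (h0.mono_left (nhdsWithin_le_nhds (s := Ioi (0:ℝ))))
          simpa using h2
        have h2 : Tendsto (fun η : ℝ => ENNReal.ofReal (η * (t / c) ^ d) * B)
            (nhdsWithin 0 (Ioi 0)) (nhds 0) := by
          have h21 := ENNReal.Tendsto.mul_const h1 (Or.inr hB)
          simpa using h21
        have h3 : Tendsto (fun η : ℝ => 1 - ENNReal.ofReal (η * (t / c) ^ d) * B)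
            (nhdsWithin 0 (Ioi 0)) (nhds 1) := by
          have h31 := ENNReal.Tendsto.sub (tendsto_const_nhds : Tendsto (fun _ : ℝ => (1:ℝ≥0∞)) (nhdsWithin 0 (Ioi 0)) (nhds 1)) h2
            (Or.inl ENNReal.one_ne_top)
          simpa using h31
        have h4 := ENNReal.Tendsto.const_mul (a := ENNReal.ofReal (φ t)) h3 (Or.inr ENNReal.ofReal_ne_top)
        simpa using h4
      filter_upwards [htend.eventually_const_lt hta, eventually_mem_nhdsWithin] with η h1 h2
      exact lt_of_lt_of_le h1 (hglow t ht0 η h2)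
    · intro b hb
      filter_upwards [eventually_mem_nhdsWithin] with η hη
      exact lt_of_le_of_lt (hgub η hη) hb

end
end

section
/- For every η > 0, lim_{N→∞, N∈ℕ} f_N(η) = g(η); equivalently, if X̂^{(N)} denotes an optimal N-point reconstruction of a uniform random vector X on [0,1)^d (i.e., a minimizer of E[φ((N/η)^{1/d} ‖X − X̂‖)] over all random vectors X̂ whose range has at most N elements), then lim_{N→∞} E[φ((N/η)^{1/d} ‖X − X̂^{(N)}‖)] = g(η). -/
open MeasureTheory Filter Set
open scoped ENNReal NNReal

noncomputable section

section AuxNorm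

variable {d : ℕ} {nrm : Rd d → ℝ} {φ : ℝ → ℝ}

lemma IsNorm.zero' (h : IsNorm nrm) : nrm 0 = 0 := (h.2.1 0).2 rfl

lemma IsNorm.nrm_neg (h : IsNorm nrm) (x : Rd d) : nrm (-x) = nrm x := by
  have := h.2.2.1 (-1) x
  simpa using this

lemma IsNorm.abs_sub' (h : IsNorm nrm) (a b : Rd d) : |nrm a - nrm b| ≤ nrm (a - b) := by
  have h1 : nrm a ≤ nrm (a - b) + nrm b := by
    have := h.2.2.2 (a - b) b
    simpa using this
  have h2 : nrm b ≤ nrm (a - b) + nrm a := by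
    have h3 := h.2.2.2 (b - a) a
    simp only [sub_add_cancel] at h3
    have h4 : nrm (b - a) = nrm (a - b) := by
      rw [show b - a = -(a - b) by abel, h.nrm_neg]
    linarith
  rw [abs_le]
  constructor <;> linarith

lemma IsNorm.nrm_sum_le (h : IsNorm nrm) {ι : Type*} (s : Finset ι) (f : ι → Rd d) :
    nrm (∑ i ∈ s, f i) ≤ ∑ i ∈ s, nrm (f i) := by
  classical
  induction s using Finset.induction_on with
  | empty => simp [h.zero']
  | insert _ _ hx ih =>
    rw [Finset.sum_insert hx, Finset.sum_insert hx]
    calc nrm (_ + _) ≤ nrm _ + nrm _ := h.2.2.2 _ _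
    _ ≤ _ := by linarith

lemma IsNorm.le_coord (h : IsNorm nrm) (v : Rd d) :
    nrm v ≤ ∑ i : Fin d, |v i| * nrm (Pi.single i 1) := by
  have hv : ∑ i : Fin d, Pi.single i (v i) = v := Finset.univ_sum_single v
  calc nrm v = nrm (∑ i : Fin d, Pi.single i (v i)) := by rw [hv]
  _ ≤ ∑ i : Fin d, nrm (Pi.single i (v i)) := h.nrm_sum_le _ _
  _ = ∑ i : Fin d, |v i| * nrm (Pi.single i 1) := by
      refine Finset.sum_congr rfl fun i _ => ?_
      have h5 : (Pi.single i (v i) : Rd d) = (v i) • (Pi.single i 1 : Rd d) := by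
        funext j
        by_cases hj : j = i
        · subst hj; simp
        · simp [Pi.single_eq_of_ne hj]
      rw [h5, h.2.2.1]

lemma IsNorm.continuous' (h : IsNorm nrm) : Continuous nrm := by
  set K : ℝ := ∑ i : Fin d, nrm (Pi.single i 1) with hK
  have hK0 : 0 ≤ K := Finset.sum_nonneg fun i _ => h.1 _
  have hlip : ∀ a b : Rd d, |nrm a - nrm b| ≤ K * dist a b := by
    intro a b
    refine (h.abs_sub' a b).trans ((h.le_coord _).trans ?_)
    rw [hK, Finset.sum_mul]
    refine Finset.sum_le_sum fun i _ => ?_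
    have h1 : |(a - b) i| ≤ dist a b := by
      rw [show (a - b) i = a i - b i from rfl, ← Real.dist_eq]
      exact dist_le_pi_dist a b i
    rw [mul_comm]
    exact mul_le_mul_of_nonneg_left h1 (h.1 _)
  rw [Metric.continuous_iff]
  intro b ε hε
  refine ⟨ε / (K + 1), by positivity, fun a hab => ?_⟩
  rw [Real.dist_eq]
  have hKp : (0:ℝ) < K + 1 := by positivity
  calc |nrm a - nrm b| ≤ K * dist a b := hlip a b
  _ ≤ K * (ε / (K + 1)) := mul_le_mul_of_nonneg_left hab.le hK0
  _ < (K + 1) * (ε / (K + 1)) := by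
      exact mul_lt_mul_of_pos_right (lt_add_one K) (div_pos hε hKp)
  _ = ε := by field_simp

end AuxNorm

section AuxDSet

variable {d : ℕ} {nrm : Rd d → ℝ} {φ : ℝ → ℝ} {C : Finset (Rd d)}

lemma dSet_eq_inf' (hC : C.Nonempty) (x : Rd d) :
    dSet nrm x ↑C = C.inf' hC fun y => nrm (x - y) := by
  rw [Finset.inf'_eq_csInf_image]
  rfl

lemma dSet_nonneg (h : IsNorm nrm) (hC : C.Nonempty) (x : Rd d) : 0 ≤ dSet nrm x ↑C := by
  rw [dSet_eq_inf' hC]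
  exact Finset.le_inf' hC _ fun y _ => h.1 _

lemma dSet_le (hC : C.Nonempty) {y : Rd d} (hy : y ∈ C) (x : Rd d) :
    dSet nrm x ↑C ≤ nrm (x - y) := by
  rw [dSet_eq_inf' hC]
  exact Finset.inf'_le _ hy

lemma le_dSet (hC : C.Nonempty) {c : ℝ} {x : Rd d} (h : ∀ y ∈ C, c ≤ nrm (x - y)) :
    c ≤ dSet nrm x ↑C := by
  rw [dSet_eq_inf' hC]
  exact Finset.le_inf' hC _ h

lemma exists_dSet_eq (hC : C.Nonempty) (x : Rd d) :
    ∃ y ∈ C, dSet nrm x ↑C = nrm (x - y) := by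
  obtain ⟨y, hy, hxy⟩ := Finset.exists_mem_eq_inf' hC fun y => nrm (x - y)
  exact ⟨y, hy, by rw [dSet_eq_inf' hC, hxy]⟩

lemma dSet_continuous (h : IsNorm nrm) (hC : C.Nonempty) :
    Continuous fun x => dSet nrm x ↑C := by
  have heq : (fun x => dSet nrm x ↑C) = fun x => C.inf' hC fun y => nrm (x - y) :=
    funext (dSet_eq_inf' hC)
  rw [heq]
  refine continuous_iff_continuousAt.2 fun x => ?_
  exact ContinuousAt.finset_inf'_apply hC fun y _ =>
    (h.continuous'.comp (continuous_id.sub continuous_const)).continuousAt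

lemma psi_monotone (hφ : PhiOK φ) : Monotone fun t => φ (max t 0) := by
  intro a b hab
  exact hφ.1 (mem_Ici.2 (le_max_right a 0)) (mem_Ici.2 (le_max_right b 0))
    (max_le_max hab le_rfl)

lemma phi_zero (hφ : PhiOK φ) : φ 0 = 0 := by
  have h1 : 0 ≤ φ 0 := hφ.2.1 0 le_rfl
  have h2 : φ 0 ≤ 0 := by
    refine ge_of_tendsto hφ.2.2.2.1 ?_
    filter_upwards [self_mem_nhdsWithin] with t ht
    exact hφ.1 (mem_Ici.2 le_rfl) (mem_Ici.2 (le_of_lt ht)) (le_of_lt ht)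
  linarith

lemma integrand_measurable (h : IsNorm nrm) (hφ : PhiOK φ) (hC : C.Nonempty) {c : ℝ}
    (hc : 0 ≤ c) :
    Measurable fun x => ENNReal.ofReal (φ (c * dSet nrm x ↑C)) := by
  have heq : (fun x => ENNReal.ofReal (φ (c * dSet nrm x ↑C))) =
      fun x => ENNReal.ofReal ((fun t => φ (max t 0)) (c * dSet nrm x ↑C)) := by
    funext x
    simp only
    rw [max_eq_left (mul_nonneg hc (dSet_nonneg h hC x))]
  rw [heq]
  exact ENNReal.measurable_ofReal.comp
    ((psi_monotone hφ).measurable.comp (((dSet_continuous h hC).measurable).const_mul c))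

lemma unitCube_measurable : MeasurableSet (unitCube d) :=
  MeasurableSet.univ_pi fun _ => measurableSet_Ico

lemma volume_unitCube : (volume (unitCube d)) = 1 := by
  rw [unitCube, volume_pi_pi]
  simp

lemma V_lt_top (h : IsNorm nrm) (hφ : PhiOK φ) (hC : C.Nonempty) {c : ℝ} (hc : 0 ≤ c) :
    ∫⁻ x in unitCube d, ENNReal.ofReal (φ (c * dSet nrm x ↑C)) ∂volume ≠ ∞ := by
  have hCC := hC
  obtain ⟨y₀, hy₀⟩ := hCC
  set R : ℝ := ∑ i : Fin d, (1 + |y₀ i|) * nrm (Pi.single i 1) with hR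
  have hR0 : 0 ≤ R := Finset.sum_nonneg fun i _ =>
    mul_nonneg (by positivity) (h.1 _)
  have hdle : ∀ x ∈ unitCube d, dSet nrm x ↑C ≤ R := by
    intro x hx
    refine (dSet_le hC hy₀ x).trans ((h.le_coord _).trans ?_)
    refine Finset.sum_le_sum fun i _ => ?_
    have hxi : x i ∈ Ico (0:ℝ) 1 := hx i (mem_univ i)
    have h1 : |(x - y₀) i| ≤ 1 + |y₀ i| := by
      rw [show (x - y₀) i = x i - y₀ i from rfl]
      have h2 : |x i| ≤ 1 := by
        rw [abs_of_nonneg hxi.1]; exact hxi.2.le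
      calc |x i - y₀ i| ≤ |x i| + |y₀ i| := abs_sub (x i) (y₀ i)
      _ ≤ 1 + |y₀ i| := by linarith
    exact mul_le_mul_of_nonneg_right h1 (h.1 _)
  have hle : ∀ x ∈ unitCube d,
      ENNReal.ofReal (φ (c * dSet nrm x ↑C)) ≤ ENNReal.ofReal (φ (c * R)) := by
    intro x hx
    exact ENNReal.ofReal_le_ofReal (hφ.1 (mem_Ici.2 (mul_nonneg hc (dSet_nonneg h hC x)))
      (mem_Ici.2 (mul_nonneg hc hR0)) (mul_le_mul_of_nonneg_left (hdle x hx) hc))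
  refine ne_of_lt (lt_of_le_of_lt (setLIntegral_mono' unitCube_measurable hle) ?_)
  rw [setLIntegral_const]
  exact ENNReal.mul_lt_top ENNReal.ofReal_lt_top (by rw [volume_unitCube]; exact ENNReal.one_lt_top)

end AuxDSet

section AuxSphere

variable {d : ℕ} {nrm : Rd d → ℝ} {φ : ℝ → ℝ} {C : Finset (Rd d)}

lemma sphere_null (h : IsNorm nrm) (y : Rd d) {s : ℝ} (hs : 0 < s) :
    volume {x : Rd d | nrm (x - y) = s} = 0 := by
  have hconv : Convex ℝ {x : Rd d | nrm (x - y) ≤ s} := by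
    intro a ha b hb ta tb hta htb hsum
    simp only [mem_setOf_eq] at ha hb ⊢
    have heq : ta • a + tb • b - y = ta • (a - y) + tb • (b - y) := by
      have hy : ta • y + tb • y = y := by
        rw [← add_smul, hsum, one_smul]
      rw [smul_sub, smul_sub]
      rw [show ta • a + tb • b - y = ta • a + tb • b - (ta • y + tb • y) by rw [hy]]
      abel
    rw [heq]
    calc nrm (ta • (a - y) + tb • (b - y)) ≤ nrm (ta • (a - y)) + nrm (tb • (b - y)) :=
        h.2.2.2 _ _
    _ = ta * nrm (a - y) + tb * nrm (b - y) := by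
        rw [h.2.2.1, h.2.2.1, abs_of_nonneg hta, abs_of_nonneg htb]
    _ ≤ ta * s + tb * s := by
        exact add_le_add (mul_le_mul_of_nonneg_left ha hta) (mul_le_mul_of_nonneg_left hb htb)
    _ = s := by rw [← add_mul, hsum, one_mul]
  have hfront := hconv.addHaar_frontier (volume : Measure (Rd d))
  refine measure_mono_null ?_ hfront
  intro x hx
  simp only [mem_setOf_eq] at hx
  have hclosed : IsClosed {x : Rd d | nrm (x - y) ≤ s} :=
    IsClosed.preimage (h.continuous'.comp (continuous_id.sub continuous_const)) isClosed_Iic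
  rw [hclosed.frontier_eq]
  refine ⟨(by simp only [mem_setOf_eq]; exact hx.le), ?_⟩
  intro hint
  have htend : Tendsto (fun n : ℕ => x + ((n:ℝ) + 1)⁻¹ • (x - y)) atTop (nhds x) := by
    have h1 : Tendsto (fun n : ℕ => ((n:ℝ) + 1)⁻¹) atTop (nhds 0) := by
      simpa [one_div] using tendsto_one_div_add_atTop_nhds_zero_nat (𝕜 := ℝ)
    have h2 := (h1.smul_const (x - y)).const_add x
    simpa using h2
  have hev := htend.eventually_mem (isOpen_interior.mem_nhds hint)
  obtain ⟨n, hn⟩ := hev.exists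
  have hmem' := interior_subset hn
  simp only [mem_setOf_eq] at hmem'
  have hmem : nrm (x + ((n:ℝ) + 1)⁻¹ • (x - y) - y) ≤ s := hmem'
  have hpos : (0:ℝ) < ((n:ℝ) + 1)⁻¹ := by positivity
  have hcalc : nrm (x + ((n:ℝ) + 1)⁻¹ • (x - y) - y) = (1 + ((n:ℝ) + 1)⁻¹) * s := by
    have heq2 : x + ((n:ℝ) + 1)⁻¹ • (x - y) - y = (1 + ((n:ℝ) + 1)⁻¹) • (x - y) := by
      rw [add_smul, one_smul]
      abel
    rw [heq2, h.2.2.1, abs_of_pos (by positivity), hx]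
  nlinarith [hmem, hcalc, hpos, hs]

lemma psi_cont_nonpos (hφ : PhiOK φ) {t : ℝ} (ht : t ≤ 0) :
    ContinuousAt (fun u => φ (max u 0)) t := by
  rcases lt_or_eq_of_le ht with hlt | heq
  · have hev : (fun u => φ (max u 0)) =ᶠ[nhds t] fun _ => φ 0 := by
      filter_upwards [Iio_mem_nhds hlt] with u hu
      rw [max_eq_right (le_of_lt hu)]
    exact ContinuousAt.congr continuousAt_const hev.symm
  · subst heq
    have hφ0 : φ 0 = 0 := phi_zero hφ
    have hval : φ (max (0:ℝ) 0) = 0 := by simp [hφ0]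
    rw [ContinuousAt, hval]
    have hnhds : nhds (0:ℝ) = nhdsWithin 0 (Iic 0) ⊔ nhdsWithin 0 (Ioi 0) := by
      rw [← nhdsWithin_union, Iic_union_Ioi, nhdsWithin_univ]
    have hmain : Tendsto (fun u => φ (max u 0))
        (nhdsWithin 0 (Iic 0) ⊔ nhdsWithin 0 (Ioi 0)) (nhds 0) := by
      rw [tendsto_sup]
      constructor
      · refine Tendsto.congr' ?_ tendsto_const_nhds
        filter_upwards [self_mem_nhdsWithin] with u hu
        rw [max_eq_right (mem_Iic.1 hu), hφ0]
      · refine Tendsto.congr' ?_ hφ.2.2.2.1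
        filter_upwards [self_mem_nhdsWithin] with u hu
        rw [max_eq_left (le_of_lt (mem_Ioi.1 hu))]
    exact hmain.mono_left (le_of_eq hnhds)

lemma exists_scale_gt (h : IsNorm nrm) (hφ : PhiOK φ) (hC : C.Nonempty)
    {lam : ℝ} (hlam : 0 < lam) {a : ℝ≥0∞}
    (hV : ∫⁻ x in unitCube d, ENNReal.ofReal (φ (lam * dSet nrm x ↑C)) ∂volume < a) :
    ∃ lam', lam < lam' ∧
      ∫⁻ x in unitCube d, ENNReal.ofReal (φ (lam' * dSet nrm x ↑C)) ∂volume < a := by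
  set ψ : ℝ → ℝ := fun t => φ (max t 0) with hψ
  have hψm : Monotone ψ := psi_monotone hφ
  set lamn : ℕ → ℝ := fun n => lam * (1 + ((n:ℝ) + 1)⁻¹) with hlamn
  have hinvpos : ∀ n : ℕ, (0:ℝ) < ((n:ℝ) + 1)⁻¹ := fun n => by positivity
  have hlamn_pos : ∀ n, 0 < lamn n := fun n => by
    have := hinvpos n; simp only [hlamn]; nlinarith
  have hlamn_le : ∀ n, lamn n ≤ 2 * lam := fun n => by
    have h1 : ((n:ℝ) + 1)⁻¹ ≤ 1 := by
      rw [inv_le_one_iff₀]; right; linarith [Nat.cast_nonneg (α := ℝ) n]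
    simp only [hlamn]; nlinarith
  set D := {t : ℝ | ¬ ContinuousAt ψ t} with hD
  have hDc : D.Countable := hψm.countable_not_continuousAt
  have hbad : volume {x : Rd d | lam * dSet nrm x ↑C ∈ D} = 0 := by
    have hsub : {x : Rd d | lam * dSet nrm x ↑C ∈ D} ⊆
        ⋃ t ∈ D, {x : Rd d | lam * dSet nrm x ↑C = t} := fun x hx => mem_biUnion hx rfl
    refine measure_mono_null hsub ((measure_biUnion_null_iff hDc).2 fun t ht => ?_)
    have htpos : 0 < t := by
      by_contra hle
      exact ht (psi_cont_nonpos hφ (not_lt.1 hle))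
    have hsub2 : {x : Rd d | lam * dSet nrm x ↑C = t} ⊆
        ⋃ y ∈ (C : Set (Rd d)), {x : Rd d | nrm (x - y) = t / lam} := by
      intro x hx
      simp only [mem_setOf_eq] at hx
      obtain ⟨y, hy, hxy⟩ := exists_dSet_eq (nrm := nrm) hC x
      refine mem_biUnion hy ?_
      simp only [mem_setOf_eq]
      rw [← hxy, eq_div_iff hlam.ne']
      linarith [hx]
    exact measure_mono_null hsub2 ((measure_biUnion_null_iff C.countable_toSet).2
      fun y _ => sphere_null h y (div_pos htpos hlam))
  have hmeas : ∀ n, Measurable fun x => ENNReal.ofReal (φ (lamn n * dSet nrm x ↑C)) :=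
    fun n => integrand_measurable h hφ hC (hlamn_pos n).le
  have hconv : Tendsto (fun n => ∫⁻ x in unitCube d,
      ENNReal.ofReal (φ (lamn n * dSet nrm x ↑C)) ∂volume) atTop
      (nhds (∫⁻ x in unitCube d, ENNReal.ofReal (φ (lam * dSet nrm x ↑C)) ∂volume)) := by
    refine tendsto_lintegral_of_dominated_convergence
      (fun x => ENNReal.ofReal (φ (2 * lam * dSet nrm x ↑C))) hmeas ?_ ?_ ?_
    · intro n
      refine Eventually.of_forall fun x => ?_
      refine ENNReal.ofReal_le_ofReal (hφ.1 (mem_Ici.2 (mul_nonneg (hlamn_pos n).le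
        (dSet_nonneg h hC x))) (mem_Ici.2 (mul_nonneg (by positivity) (dSet_nonneg h hC x))) ?_)
      exact mul_le_mul_of_nonneg_right (hlamn_le n) (dSet_nonneg h hC x)
    · exact V_lt_top h hφ hC (by positivity)
    · have h0 : ∀ᵐ x ∂(volume.restrict (unitCube d)), lam * dSet nrm x ↑C ∉ D := by
        exact ae_mono Measure.restrict_le_self (measure_eq_zero_iff_ae_notMem.1 hbad)
      filter_upwards [h0] with x hx
      have hcont : ContinuousAt ψ (lam * dSet nrm x ↑C) := not_not.1 hx
      have hts : Tendsto (fun n => lamn n * dSet nrm x ↑C) atTop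
          (nhds (lam * dSet nrm x ↑C)) := by
        have h1 : Tendsto (fun n : ℕ => ((n:ℝ) + 1)⁻¹) atTop (nhds 0) := by
          simpa [one_div] using tendsto_one_div_add_atTop_nhds_zero_nat (𝕜 := ℝ)
        have h2 : Tendsto (fun n : ℕ => lamn n) atTop (nhds lam) := by
          have h3 := ((h1.const_add 1).const_mul lam)
          simpa [hlamn] using h3
        exact h2.mul_const _
      have h4 := (ENNReal.continuous_ofReal.continuousAt.tendsto).comp
        ((hcont.tendsto).comp hts)
      have h5 : ∀ c : ℝ, 0 ≤ c → ψ (c * dSet nrm x ↑C) = φ (c * dSet nrm x ↑C) := by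
        intro c hc
        simp only [hψ]
        rw [max_eq_left (mul_nonneg hc (dSet_nonneg h hC x))]
      refine Tendsto.congr (fun n => ?_) (by rw [← h5 lam hlam.le]; exact h4)
      simp only [Function.comp]
      rw [h5 _ (hlamn_pos _).le]
  obtain ⟨n, hn⟩ := (hconv.eventually_lt_const hV).exists
  refine ⟨lamn n, ?_, hn⟩
  have := hinvpos n
  simp only [hlamn]
  nlinarith

end AuxSphere

section AuxCopy

variable {d : ℕ} {nrm : Rd d → ℝ} {φ : ℝ → ℝ} {C : Finset (Rd d)}

/-- the affine map `x ↦ k x - j`. -/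
def Tmap (d k : ℕ) (j : Fin d → Fin k) : Rd d → Rd d :=
  fun x => (k : ℝ) • x - fun i => ((j i : ℕ) : ℝ)

lemma Tmap_apply (k : ℕ) (j : Fin d → Fin k) (x : Rd d) (i : Fin d) :
    Tmap d k j x i = (k : ℝ) * x i - ((j i : ℕ) : ℝ) := rfl

lemma Tmap_measurable (k : ℕ) (j : Fin d → Fin k) : Measurable (Tmap d k j) := by
  have : Continuous (Tmap d k j) := by
    refine Continuous.sub ?_ continuous_const
    exact (continuous_id.const_smul (k : ℝ) : Continuous fun x : Rd d => (k : ℝ) • x)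
  exact this.measurable

lemma map_Tmap (k : ℕ) (hk : 0 < k) (j : Fin d → Fin k) :
    Measure.map (Tmap d k j) (volume : Measure (Rd d)) =
      (((k : ℝ≥0∞)) ^ d)⁻¹ • (volume : Measure (Rd d)) := by
  have hk0 : ((k : ℝ)) ≠ 0 := by positivity
  have h1 : Tmap d k j = (fun y => y + -(fun i => ((j i : ℕ) : ℝ))) ∘
      (fun x : Rd d => (k : ℝ) • x) := by
    funext x
    simp [Tmap, sub_eq_add_neg]
  have hg : Measurable (fun y : Rd d => y + -(fun i => ((j i : ℕ) : ℝ))) :=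
    measurable_add_const _
  have hsm : Measurable (fun x : Rd d => (k : ℝ) • x) := measurable_const_smul _
  rw [h1, ← Measure.map_map hg hsm]
  rw [Measure.map_addHaar_smul (volume : Measure (Rd d)) hk0]
  rw [Measure.map_smul, map_add_right_eq_self]
  congr 1
  have hfr : Module.finrank ℝ (Rd d) = d := Module.finrank_fin_fun ℝ
  rw [hfr, abs_of_nonneg (by positivity), ENNReal.ofReal_inv_of_pos (by positivity),
    ENNReal.ofReal_pow (by positivity), ENNReal.ofReal_natCast]

lemma box_lintegral (G : Rd d → ℝ≥0∞) (hG : Measurable G) {k : ℕ} (hk : 0 < k)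
    (j : Fin d → Fin k) :
    ∫⁻ x in Tmap d k j ⁻¹' (unitCube d), G (Tmap d k j x) ∂volume
      = ((k : ℝ≥0∞) ^ d)⁻¹ * ∫⁻ u in unitCube d, G u ∂volume := by
  rw [← setLIntegral_map unitCube_measurable hG (Tmap_measurable k j)]
  rw [map_Tmap k hk j, Measure.restrict_smul, lintegral_smul_measure, smul_eq_mul]

lemma mem_Tmap_preimage {k : ℕ} (j : Fin d → Fin k) (x : Rd d) :
    x ∈ Tmap d k j ⁻¹' (unitCube d) ↔
      ∀ i, 0 ≤ (k : ℝ) * x i - ((j i : ℕ) : ℝ) ∧ (k : ℝ) * x i - ((j i : ℕ) : ℝ) < 1 := by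
  simp only [mem_preimage, unitCube, Set.mem_pi, mem_univ, forall_true_left, mem_Ico,
    Tmap_apply]

lemma cube_eq_union {k : ℕ} (hk : 0 < k) :
    unitCube d = ⋃ j : Fin d → Fin k, Tmap d k j ⁻¹' (unitCube d) := by
  have hkR : (0:ℝ) < (k : ℝ) := by exact_mod_cast hk
  ext x
  simp only [mem_iUnion]
  constructor
  · intro hx
    have hxi : ∀ i, 0 ≤ x i ∧ x i < 1 := fun i => hx i (mem_univ i)
    refine ⟨fun i => ⟨⌊(k : ℝ) * x i⌋₊, ?_⟩, ?_⟩
    · rw [Nat.floor_lt (mul_nonneg hkR.le (hxi i).1)]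
      nlinarith [(hxi i).2, (hxi i).1]
    · rw [mem_Tmap_preimage]
      intro i
      constructor
      · simp only [sub_nonneg]
        exact Nat.floor_le (mul_nonneg hkR.le (hxi i).1)
      · have := Nat.lt_floor_add_one ((k : ℝ) * x i)
        simp only [sub_lt_iff_lt_add]
        linarith [this]
  · rintro ⟨j, hj⟩
    rw [mem_Tmap_preimage] at hj
    intro i _
    have h1 := (hj i).1
    have h2 := (hj i).2
    have hjk : ((j i : ℕ) : ℝ) + 1 ≤ (k : ℝ) := by
      have hlt : (j i : ℕ) < k := (j i).2
      exact_mod_cast Nat.succ_le_of_lt hlt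
    constructor
    · nlinarith [Nat.cast_nonneg (α := ℝ) (j i : ℕ)]
    · nlinarith

lemma Tmap_preimage_measurable {k : ℕ} (j : Fin d → Fin k) :
    MeasurableSet (Tmap d k j ⁻¹' (unitCube d)) :=
  unitCube_measurable.preimage (Tmap_measurable k j)

lemma Tmap_disjoint {k : ℕ} (hk : 0 < k) :
    Pairwise (Function.onFun Disjoint fun j : Fin d → Fin k => Tmap d k j ⁻¹' (unitCube d)) := by
  intro j j' hne
  rw [Function.onFun, Set.disjoint_left]
  intro x hx hx'
  rw [mem_Tmap_preimage] at hx hx'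
  refine hne (funext fun i => ?_)
  have h1 := (hx i).1
  have h2 := (hx i).2
  have h1' := (hx' i).1
  have h2' := (hx' i).2
  have hflo : ∀ m : ℕ, (m : ℝ) ≤ (k : ℝ) * x i → (k : ℝ) * x i < m + 1 →
      ⌊(k : ℝ) * x i⌋₊ = m := by
    intro m hm1 hm2
    rw [Nat.floor_eq_iff (by linarith [Nat.cast_nonneg (α := ℝ) m])]
    exact ⟨by exact_mod_cast hm1, by exact_mod_cast hm2⟩
  have e1 : ⌊(k : ℝ) * x i⌋₊ = (j i : ℕ) := hflo _ (by linarith) (by linarith)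
  have e2 : ⌊(k : ℝ) * x i⌋₊ = (j' i : ℕ) := hflo _ (by linarith) (by linarith)
  exact Fin.ext (e1 ▸ e2)

lemma lintegral_cube_decomp (F : Rd d → ℝ≥0∞) {k : ℕ} (hk : 0 < k) :
    ∫⁻ x in unitCube d, F x ∂volume
      = ∑ j : Fin d → Fin k, ∫⁻ x in Tmap d k j ⁻¹' (unitCube d), F x ∂volume := by
  conv_lhs => rw [cube_eq_union (d := d) hk]
  rw [lintegral_iUnion (fun j => Tmap_preimage_measurable j) (Tmap_disjoint hk)]
  exact tsum_fintype _

lemma copy_bound (h : IsNorm nrm) (hφ : PhiOK φ) (hC : C.Nonempty)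
    {k : ℕ} (hk : 0 < k) {s : ℝ} (hs : 0 ≤ s) :
    ∃ C' : Finset (Rd d), C'.Nonempty ∧ C'.card ≤ k ^ d * C.card ∧
      ∫⁻ x in unitCube d, ENNReal.ofReal (φ (s * dSet nrm x ↑C')) ∂volume ≤
        ∫⁻ u in unitCube d, ENNReal.ofReal (φ (s / (k : ℝ) * dSet nrm u ↑C)) ∂volume := by
  classical
  have hkR : (0:ℝ) < (k : ℝ) := Nat.cast_pos.2 hk
  set f : (Fin d → Fin k) × Rd d → Rd d :=
    fun p => fun i => (((p.1 i : ℕ) : ℝ) + p.2 i) / (k : ℝ) with hf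
  set C' : Finset (Rd d) := ((Finset.univ : Finset (Fin d → Fin k)) ×ˢ C).image f with hC'
  have hCC := hC
  obtain ⟨y₀, hy₀⟩ := hCC
  have hC'ne : C'.Nonempty := ⟨f (fun _ => ⟨0, hk⟩, y₀),
    Finset.mem_image_of_mem f (Finset.mem_product.2 ⟨Finset.mem_univ _, hy₀⟩)⟩
  have hcard : C'.card ≤ k ^ d * C.card := by
    calc C'.card ≤ ((Finset.univ : Finset (Fin d → Fin k)) ×ˢ C).card := Finset.card_image_le
    _ = (Finset.univ : Finset (Fin d → Fin k)).card * C.card := Finset.card_product _ _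
    _ = k ^ d * C.card := by
        rw [Finset.card_univ, Fintype.card_fun]
        simp
  refine ⟨C', hC'ne, hcard, ?_⟩
  have hGmeas : Measurable fun u => ENNReal.ofReal (φ (s / (k : ℝ) * dSet nrm u ↑C)) :=
    integrand_measurable h hφ hC (by positivity)
  have hkey : ∀ (j : Fin d → Fin k), ∀ x ∈ Tmap d k j ⁻¹' (unitCube d),
      ENNReal.ofReal (φ (s * dSet nrm x ↑C')) ≤
        ENNReal.ofReal (φ (s / (k : ℝ) * dSet nrm (Tmap d k j x) ↑C)) := by
    intro j x _
    set u := Tmap d k j x with hu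
    have hdd : (k : ℝ) * dSet nrm x ↑C' ≤ dSet nrm u ↑C := by
      refine le_dSet (nrm := nrm) hC fun y hy => ?_
      have hz : f (j, y) ∈ C' :=
        Finset.mem_image_of_mem f (Finset.mem_product.2 ⟨Finset.mem_univ _, hy⟩)
      have hxz : x - f (j, y) = (k : ℝ)⁻¹ • (u - y) := by
        funext i
        simp only [Pi.sub_apply, Pi.smul_apply, smul_eq_mul, hu, Tmap_apply, hf]
        field_simp
        ring
      have h1 : dSet nrm x ↑C' ≤ nrm (x - f (j, y)) := dSet_le hC'ne hz x
      rw [hxz, h.2.2.1, abs_of_pos (by positivity)] at h1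
      calc (k : ℝ) * dSet nrm x ↑C' ≤ (k : ℝ) * ((k : ℝ)⁻¹ * nrm (u - y)) :=
          mul_le_mul_of_nonneg_left h1 hkR.le
      _ = nrm (u - y) := by field_simp
    refine ENNReal.ofReal_le_ofReal (hφ.1 (mem_Ici.2 (mul_nonneg hs
      (dSet_nonneg h hC'ne x))) (mem_Ici.2 (mul_nonneg (by positivity)
      (dSet_nonneg h hC u))) ?_)
    have h2 : s * dSet nrm x ↑C' = s / (k : ℝ) * ((k : ℝ) * dSet nrm x ↑C') := by
      field_simp
    rw [h2]
    exact mul_le_mul_of_nonneg_left hdd (by positivity)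
  calc ∫⁻ x in unitCube d, ENNReal.ofReal (φ (s * dSet nrm x ↑C')) ∂volume
      = ∑ j : Fin d → Fin k, ∫⁻ x in Tmap d k j ⁻¹' (unitCube d),
          ENNReal.ofReal (φ (s * dSet nrm x ↑C')) ∂volume :=
        lintegral_cube_decomp _ hk
  _ ≤ ∑ j : Fin d → Fin k, ∫⁻ x in Tmap d k j ⁻¹' (unitCube d),
        ENNReal.ofReal (φ (s / (k : ℝ) * dSet nrm (Tmap d k j x) ↑C)) ∂volume := by
      refine Finset.sum_le_sum fun j _ => ?_
      exact setLIntegral_mono (hGmeas.comp (Tmap_measurable k j)) (hkey j)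
  _ = ∑ _j : Fin d → Fin k, ((k : ℝ≥0∞) ^ d)⁻¹ *
        ∫⁻ u in unitCube d, ENNReal.ofReal (φ (s / (k : ℝ) * dSet nrm u ↑C)) ∂volume := by
      refine Finset.sum_congr rfl fun j _ => ?_
      exact box_lintegral _ hGmeas hk j
  _ = ∫⁻ u in unitCube d, ENNReal.ofReal (φ (s / (k : ℝ) * dSet nrm u ↑C)) ∂volume := by
      rw [Finset.sum_const, Finset.card_univ, Fintype.card_fun, Fintype.card_fin,
        Fintype.card_fin, nsmul_eq_mul, Nat.cast_pow, ← mul_assoc,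
        ENNReal.mul_inv_cancel (pow_ne_zero d (by exact_mod_cast hk.ne' : (k:ℝ≥0∞) ≠ 0))
          (ENNReal.pow_ne_top (ENNReal.natCast_ne_top k)), one_mul]

end AuxCopy

set_option maxHeartbeats 1000000 in
/-- For every `η > 0`, `f_N(η) → g(η)` as `N → ∞` (along the naturals); equivalently,
optimal `N`-point reconstructions of the uniform distribution achieve `g(η)` in the limit. -/
theorem statement6 {d : ℕ} (hd : 0 < d)
    (nrm : Rd d → ℝ) (hnrm : IsNorm nrm) (φ : ℝ → ℝ) (hφ : PhiOK φ)
    (η : ℝ) (hη : 0 < η) :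
    Tendsto (fun N : ℕ => fNq nrm φ (N : ℝ) η) atTop (nhds (gq nrm φ η)) := by
  have hgq : gq nrm φ η = ⨅ N ∈ Ici (1:ℝ), fNq nrm φ N η := by
    unfold gq
    rw [if_pos hη]
  rw [hgq]
  refine tendsto_order.2 ⟨fun a ha => ?_, fun a ha => ?_⟩
  · filter_upwards [eventually_ge_atTop 1] with N hN
    refine ha.trans_le (iInf₂_le ((N : ℕ) : ℝ) ?_)
    rw [mem_Ici]
    exact_mod_cast hN
  · -- upper bound part
    obtain ⟨M, hMlt⟩ := iInf_lt_iff.1 ha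
    obtain ⟨hM1, hMlt⟩ := iInf_lt_iff.1 hMlt
    rw [mem_Ici] at hM1
    have hM0 : 0 < M := lt_of_lt_of_le one_pos hM1
    unfold fNq at hMlt
    obtain ⟨C, hMlt⟩ := iInf_lt_iff.1 hMlt
    obtain ⟨hCne, hMlt⟩ := iInf_lt_iff.1 hMlt
    obtain ⟨hCcard, hCV⟩ := iInf_lt_iff.1 hMlt
    have hdR : ((d:ℝ)) ≠ 0 := Nat.cast_ne_zero.2 hd.ne'
    have hlam : 0 < (M / η) ^ (1 / (d:ℝ)) := Real.rpow_pos_of_pos (div_pos hM0 hη) _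
    obtain ⟨lam₁, hlam₁, hV₁⟩ := exists_scale_gt hnrm hφ hCne hlam hCV
    set lam : ℝ := (M / η) ^ (1 / (d:ℝ)) with hlamdef
    set δ : ℝ := lam₁ / lam - 1 with hδdef
    have hδ : 0 < δ := by
      have h1 : 1 < lam₁ / lam := (one_lt_div hlam).2 hlam₁
      simp only [hδdef]
      linarith
    have hlam₁eq : (1 + δ) * lam = lam₁ := by
      simp only [hδdef]
      field_simp
      ring
    filter_upwards [eventually_ge_atTop ⌈M * (1/δ + 1)^d⌉₊] with N hN
    have hNB : M * (1/δ + 1)^d ≤ (N:ℝ) := Nat.ceil_le.1 hN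
    set r : ℝ := ((N:ℝ) / M) ^ (1 / (d:ℝ)) with hrdef
    have hr0 : 0 ≤ r := Real.rpow_nonneg (div_nonneg (Nat.cast_nonneg N) hM0.le) _
    have hq0 : (0:ℝ) ≤ 1/δ + 1 := by positivity
    have hrq : 1/δ + 1 ≤ r := by
      have h1 : (1/δ + 1)^d ≤ (N:ℝ)/M := (le_div_iff₀ hM0).2 (by linarith [hNB])
      have h2 : ((1/δ+1)^d : ℝ) ^ (1/(d:ℝ)) ≤ r :=
        Real.rpow_le_rpow (by positivity) h1 (by positivity)
      have h3 : ((1/δ+1)^d : ℝ) ^ (1/(d:ℝ)) = 1/δ + 1 := by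
        rw [← Real.rpow_natCast (1/δ+1) d, ← Real.rpow_mul hq0,
          mul_one_div_cancel hdR, Real.rpow_one]
      linarith
    set k : ℕ := ⌊r⌋₊ with hkdef
    have hk1 : 1 ≤ k := Nat.le_floor (by exact_mod_cast (by nlinarith [one_div_pos.2 hδ] : (1:ℝ) ≤ r))
    have hkpos : 0 < k := hk1
    have hkr : (k:ℝ) ≤ r := Nat.floor_le hr0
    have hkrpos : (0:ℝ) < (k:ℝ) := by exact_mod_cast hkpos
    have hrk : r < (k:ℝ) + 1 := Nat.lt_floor_add_one r
    have hkδ : 1 ≤ (k:ℝ) * δ := by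
      have h1 : 1/δ ≤ (k:ℝ) := by linarith
      calc (1:ℝ) = (1/δ) * δ := by field_simp
      _ ≤ (k:ℝ) * δ := mul_le_mul_of_nonneg_right h1 hδ.le
    set sN : ℝ := ((N:ℝ) / η) ^ (1 / (d:ℝ)) with hsdef
    have hs0 : 0 ≤ sN := Real.rpow_nonneg (div_nonneg (Nat.cast_nonneg N) hη.le) _
    have hsrl : sN = r * lam := by
      rw [hsdef, hrdef, hlamdef,
        ← Real.mul_rpow (div_nonneg (Nat.cast_nonneg N) hM0.le) (div_nonneg hM0.le hη.le)]
      congr 1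
      field_simp
    have hsk : sN / (k:ℝ) ≤ lam₁ := by
      rw [div_le_iff₀ hkrpos, ← hlam₁eq, hsrl]
      have h1 : r ≤ (1 + δ) * (k:ℝ) := by nlinarith
      nlinarith [hlam.le]
    obtain ⟨C', hC'ne, hC'card, hC'int⟩ := copy_bound hnrm hφ hCne hkpos hs0
    have hcardN : ((C'.card : ℝ)) ≤ ((N:ℕ):ℝ) := by
      have h1 : ((C'.card:ℝ)) ≤ (k:ℝ)^d * (C.card:ℝ) := by exact_mod_cast hC'card
      have h3 : (k:ℝ)^d ≤ r^d := pow_le_pow_left₀ hkrpos.le hkr d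
      have h4 : r ^ d = (N:ℝ)/M := by
        rw [hrdef, ← Real.rpow_natCast (((N:ℝ)/M) ^ (1/(d:ℝ))) d,
          ← Real.rpow_mul (div_nonneg (Nat.cast_nonneg N) hM0.le),
          one_div_mul_cancel hdR, Real.rpow_one]
      have h5 : (k:ℝ)^d * (C.card:ℝ) ≤ ((N:ℝ)/M) * M := by
        rw [← h4]
        have hc0 : (0:ℝ) ≤ (C.card:ℝ) := Nat.cast_nonneg _
        nlinarith [pow_nonneg hkrpos.le d, pow_nonneg hr0 d]
      have h6 : ((N:ℝ)/M) * M = (N:ℝ) := by field_simp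
      linarith
    have hstep1 : fNq nrm φ ((N:ℕ):ℝ) η ≤
        ∫⁻ x in unitCube d, ENNReal.ofReal (φ (sN * dSet nrm x (↑C' : Set (Rd d)))) ∂volume := by
      unfold fNq
      refine iInf_le_of_le C' (iInf_le_of_le hC'ne (iInf_le_of_le hcardN ?_))
      rw [hsdef]
    have hstep3 : ∫⁻ u in unitCube d,
        ENNReal.ofReal (φ (sN / (k:ℝ) * dSet nrm u (↑C : Set (Rd d)))) ∂volume ≤
        ∫⁻ u in unitCube d, ENNReal.ofReal (φ (lam₁ * dSet nrm u (↑C : Set (Rd d)))) ∂volume := by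
      refine setLIntegral_mono (integrand_measurable hnrm hφ hCne (hlam.le.trans hlam₁.le))
        fun u _ => ?_
      refine ENNReal.ofReal_le_ofReal (hφ.1
        (mem_Ici.2 (mul_nonneg (by positivity) (dSet_nonneg hnrm hCne u)))
        (mem_Ici.2 (mul_nonneg (hlam.le.trans hlam₁.le) (dSet_nonneg hnrm hCne u))) ?_)
      exact mul_le_mul_of_nonneg_right hsk (dSet_nonneg hnrm hCne u)
    exact lt_of_le_of_lt (hstep1.trans (hC'int.trans hstep3)) hV₁

end
end

section
/- Let M = k^d for some k ∈ ℕ, let 0 < η₁ < η₂, and let η = αη₁ + βη₂ be a convex combination (α, β ≥ 0, α + β = 1). Set N₁ = (η₁/η)N, N₂ = (η₂/η)N, b(M) = ⌊βM⌋/M and a(M) = 1 − b(M). Then for every real N ≥ 1: f_N(η) ≤ a(M) f_{N₁/M}(η₁) + b(M) f_{N₂/M}(η₂). -/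
open MeasureTheory Filter Set
open scoped ENNReal NNReal

noncomputable section

open scoped Pointwise

namespace SS

variable {d : ℕ} {nrm : Rd d → ℝ} {φ : ℝ → ℝ}

lemma nrm_zero (h : IsNorm nrm) : nrm 0 = 0 := (h.2.1 0).2 rfl

lemma nrm_sum_le (h : IsNorm nrm) {ι : Type*} (s : Finset ι) (f : ι → Rd d) :
    nrm (∑ i ∈ s, f i) ≤ ∑ i ∈ s, nrm (f i) := by
  classical
  induction s using Finset.induction with
  | empty => simp [nrm_zero h]
  | insert _ _ hx ih =>
      rw [Finset.sum_insert hx, Finset.sum_insert hx]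
      exact le_trans (h.2.2.2 _ _) (by linarith)

lemma nrm_le_const (h : IsNorm nrm) : ∃ K : ℝ, 0 ≤ K ∧ ∀ x, nrm x ≤ K * ‖x‖ := by
  classical
  refine ⟨∑ i : Fin d, nrm (Pi.single i 1), Finset.sum_nonneg fun i _ => h.1 _, fun x => ?_⟩
  have hx : x = ∑ i : Fin d, x i • (Pi.single i (1:ℝ) : Rd d) := by
    ext j
    rw [Finset.sum_apply]
    simp [Pi.single_apply]
  calc nrm x ≤ ∑ i : Fin d, nrm (x i • (Pi.single i (1:ℝ) : Rd d)) := by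
        conv_lhs => rw [hx]
        exact nrm_sum_le h _ _
    _ ≤ ∑ i : Fin d, ‖x‖ * nrm (Pi.single i (1:ℝ) : Rd d) := by
        refine Finset.sum_le_sum fun i _ => ?_
        rw [h.2.2.1]
        exact mul_le_mul_of_nonneg_right (by simpa using norm_le_pi_norm x i) (h.1 _)
    _ = _ := by rw [← Finset.mul_sum, mul_comm]

lemma nrm_continuous (h : IsNorm nrm) : Continuous nrm := by
  obtain ⟨K, hK0, hK⟩ := nrm_le_const h
  have key : ∀ x y : Rd d, |nrm x - nrm y| ≤ K * ‖x - y‖ := by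
    intro x y
    have h1 : nrm x ≤ nrm (x - y) + nrm y := by
      have := h.2.2.2 (x - y) y; simpa using this
    have hsymm : nrm (y - x) = nrm (x - y) := by
      have h1 := h.2.2.1 (-1) (x - y)
      have h2 : (-1 : ℝ) • (x - y) = y - x := by ext i; simp
      rw [h2] at h1; simpa using h1
    have h2 : nrm y ≤ nrm (x - y) + nrm x := by
      have := h.2.2.2 (y - x) x
      rw [sub_add_cancel, hsymm] at this
      exact this
    have := hK (x - y)
    rw [abs_le]; constructor <;> linarith
  rw [Metric.continuous_iff]
  intro x ε hε
  refine ⟨ε / (K + 1), by positivity, fun y hy => ?_⟩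
  have h3 := key y x
  rw [Real.dist_eq]
  have hd : ‖y - x‖ = dist y x := (dist_eq_norm y x).symm
  calc |nrm y - nrm x| ≤ K * ‖y - x‖ := h3
    _ ≤ (K + 1) * dist y x := by
        rw [hd]; exact mul_le_mul_of_nonneg_right (by linarith) dist_nonneg
    _ < (K + 1) * (ε / (K + 1)) := by
        apply mul_lt_mul_of_pos_left hy (by linarith)
    _ = ε := by field_simp


lemma dSet_nonneg (h : IsNorm nrm) (x : Rd d) (A : Set (Rd d)) : 0 ≤ dSet nrm x A :=
  Real.sInf_nonneg (by rintro z ⟨y, -, rfl⟩; exact h.1 _)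

lemma dSet_bddBelow (h : IsNorm nrm) (x : Rd d) (A : Set (Rd d)) :
    BddBelow ((fun y => nrm (x - y)) '' A) :=
  ⟨0, by rintro z ⟨y, -, rfl⟩; exact h.1 _⟩

lemma dSet_anti (h : IsNorm nrm) (x : Rd d) {A B : Set (Rd d)} (hAB : A ⊆ B)
    (hA : A.Nonempty) : dSet nrm x B ≤ dSet nrm x A :=
  csInf_le_csInf (dSet_bddBelow h x B) (hA.image _) (Set.image_mono hAB)

lemma dSet_finset_eq_inf' (x : Rd d) (C : Finset (Rd d)) (hC : C.Nonempty) :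
    dSet nrm x ↑C = C.inf' hC (fun y => nrm (x - y)) :=
  (Finset.inf'_eq_csInf_image C hC _).symm

lemma dSet_continuous (h : IsNorm nrm) (C : Finset (Rd d)) (hC : C.Nonempty) :
    Continuous fun x => dSet nrm x ↑C := by
  have : (fun x => dSet nrm x ↑C) = fun x => C.inf' hC (fun y => nrm (x - y)) := by
    funext x; exact dSet_finset_eq_inf' x C hC
  rw [this]
  exact Continuous.finset_inf'_apply hC fun y _ =>
    (nrm_continuous h).comp (continuous_id.sub continuous_const)

lemma dSet_image_affine (h : IsNorm nrm) {r : ℝ} (hr : 0 ≤ r) (b y : Rd d)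
    (C : Finset (Rd d)) :
    dSet nrm (r • y + b) (((C.image fun z => r • z + b) : Finset (Rd d)) : Set (Rd d))
      = r * dSet nrm y ↑C := by
  classical
  have hset : ((fun w => nrm ((r • y + b) - w)) '' ↑(C.image fun z => r • z + b))
      = (fun t => r * t) '' ((fun z => nrm (y - z)) '' ↑C) := by
    rw [Finset.coe_image, ← Set.image_comp, ← Set.image_comp]
    apply Set.image_congr
    intro z _
    simp only [Function.comp]
    have hz : (r • y + b) - (r • z + b) = r • (y - z) := by
      ext i
      simp only [Pi.sub_apply, Pi.add_apply, Pi.smul_apply, smul_eq_mul]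
      ring
    rw [hz, h.2.2.1, abs_of_nonneg hr]
  have himg : (fun t => r * t) '' ((fun z => nrm (y - z)) '' ↑C)
      = r • ((fun z => nrm (y - z)) '' ↑C) := by
    ext t
    simp only [Set.mem_image, Set.mem_smul_set, smul_eq_mul]
  show sInf _ = r * sInf _
  rw [hset, himg, Real.sInf_smul_of_nonneg hr, smul_eq_mul]

variable (k : ℕ)

/-- subcube indexed by `j`. -/
def cube (j : Fin d → Fin k) : Set (Rd d) :=
  univ.pi fun i => Ico ((j i : ℝ)/(k:ℝ)) (((j i : ℝ)+1)/(k:ℝ))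

/-- affine map sending the unit cube onto `cube j`. -/
def emap (j : Fin d → Fin k) : Rd d → Rd d :=
  fun y => (k:ℝ)⁻¹ • y + fun i => (j i : ℝ)/(k:ℝ)

lemma emap_measurable (j : Fin d → Fin k) : Measurable (emap k j) :=
  (measurable_id.const_smul ((k:ℝ)⁻¹)).add_const _

lemma cube_measurable (j : Fin d → Fin k) : MeasurableSet (cube k j) :=
  MeasurableSet.univ_pi fun i => measurableSet_Ico

lemma coord_aux {k : ℕ} (hk' : (0:ℝ) < k) (a t : ℝ) :
    ((a/(k:ℝ) ≤ (k:ℝ)⁻¹ * t + a/k) ∧ ((k:ℝ)⁻¹ * t + a/k < (a+1)/k)) ↔ (0 ≤ t ∧ t < 1) := by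
  have he : (k:ℝ)⁻¹ * t + a/k = (t + a)/k := by field_simp
  rw [he]
  constructor
  · rintro ⟨h1, h2⟩
    rw [div_le_div_iff₀ hk' hk'] at h1
    rw [div_lt_div_iff₀ hk' hk'] at h2
    constructor <;> nlinarith
  · rintro ⟨h1, h2⟩
    constructor
    · rw [div_le_div_iff₀ hk' hk']; nlinarith
    · rw [div_lt_div_iff₀ hk' hk']; nlinarith

lemma emap_preimage (hk : 0 < k) (j : Fin d → Fin k) :
    emap k j ⁻¹' cube k j = unitCube d := by
  have hk' : (0:ℝ) < k := by exact_mod_cast hk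
  ext y
  simp only [emap, cube, unitCube, Set.mem_preimage, Set.mem_pi, Set.mem_univ, true_implies,
    Set.mem_Ico, Pi.add_apply, Pi.smul_apply, smul_eq_mul]
  constructor
  · intro hy i
    exact (coord_aux hk' (j i : ℝ) (y i)).1 (hy i)
  · intro hy i
    exact (coord_aux hk' (j i : ℝ) (y i)).2 (hy i)

lemma cube_disjoint (hk : 0 < k) : Pairwise (Function.onFun Disjoint (cube (d := d) k)) := by
  have hk' : (0:ℝ) < k := by exact_mod_cast hk
  intro j j' hne
  rw [Function.onFun, Set.disjoint_left]
  intro x hx hx'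
  apply hne
  funext i
  have h1 := hx i (Set.mem_univ i)
  have h2 := hx' i (Set.mem_univ i)
  simp only [Set.mem_Ico] at h1 h2
  have cross : ∀ a b : Fin k, (a:ℝ)/k ≤ x i → x i < ((b:ℝ)+1)/k → (a:ℕ) ≤ (b:ℕ) := by
    intro a b hab hlt
    have h3 : (a:ℝ)/k < ((b:ℝ)+1)/k := lt_of_le_of_lt hab hlt
    rw [div_lt_div_iff₀ hk' hk'] at h3
    have h4 : (a:ℝ) < (b:ℝ) + 1 := by nlinarith
    have h5 : (a:ℕ) < (b:ℕ) + 1 := by exact_mod_cast h4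
    omega
  have hle1 := cross (j i) (j' i) h1.1 h2.2
  have hle2 := cross (j' i) (j i) h2.1 h1.2
  exact Fin.ext (le_antisymm hle1 hle2)

lemma cube_cover (hk : 0 < k) : unitCube d = ⋃ j : Fin d → Fin k, cube k j := by
  have hk' : (0:ℝ) < k := by exact_mod_cast hk
  apply Set.Subset.antisymm
  · intro x hx
    have hxi : ∀ i, 0 ≤ x i ∧ x i < 1 := by
      intro i; exact hx i (Set.mem_univ i)
    have hfl : ∀ i, ⌊(k:ℝ) * x i⌋₊ < k := by
      intro i
      have h0 : (0:ℝ) ≤ (k:ℝ) * x i := mul_nonneg hk'.le (hxi i).1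
      have h1 : (k:ℝ) * x i < k := by nlinarith [(hxi i).2]
      exact Nat.floor_lt h0 |>.2 (by exact_mod_cast h1)
    refine Set.mem_iUnion.2 ⟨fun i => ⟨⌊(k:ℝ) * x i⌋₊, hfl i⟩, ?_⟩
    intro i _
    simp only [Set.mem_Ico]
    have h0 : (0:ℝ) ≤ (k:ℝ) * x i := mul_nonneg hk'.le (hxi i).1
    have hf1 : (⌊(k:ℝ) * x i⌋₊ : ℝ) ≤ (k:ℝ) * x i := Nat.floor_le h0
    have hf2 : (k:ℝ) * x i < ⌊(k:ℝ) * x i⌋₊ + 1 := Nat.lt_floor_add_one _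
    constructor
    · rw [div_le_iff₀ hk']; nlinarith
    · rw [lt_div_iff₀ hk']; nlinarith
  · intro x hx
    obtain ⟨j, hj⟩ := Set.mem_iUnion.1 hx
    intro i _
    have h := hj i (Set.mem_univ i)
    simp only [Set.mem_Ico] at h ⊢
    have hj0 : (0:ℝ) ≤ (j i : ℝ) := by positivity
    have hjk : ((j i : ℕ) : ℝ) + 1 ≤ (k:ℝ) := by
      have := (j i).is_lt
      exact_mod_cast Nat.succ_le_of_lt this
    constructor
    · calc (0:ℝ) ≤ (j i : ℝ)/k := by positivity
        _ ≤ x i := h.1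
    · calc x i < ((j i:ℝ)+1)/k := h.2
        _ ≤ (k:ℝ)/k := by
            rw [div_le_div_iff₀ hk' hk']
            nlinarith [hjk]
        _ = 1 := div_self (ne_of_gt hk')


lemma map_emap_volume (hd : 0 < d) (hk : 0 < k) (j : Fin d → Fin k) :
    Measure.map (emap k j) (volume : Measure (Rd d))
      = ENNReal.ofReal ((k:ℝ)^d) • volume := by
  have hk' : (0:ℝ) < k := by exact_mod_cast hk
  have hr : ((k:ℝ)⁻¹ : ℝ) ≠ 0 := by positivity
  have hmap1 : Measure.map (fun y : Rd d => (k:ℝ)⁻¹ • y) volume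
      = ENNReal.ofReal ((k:ℝ)^d) • volume := by
    rw [Measure.map_addHaar_smul volume hr]
    congr 1
    rw [Module.finrank_fintype_fun_eq_card, Fintype.card_fin]
    rw [abs_of_pos (by positivity)]
    rw [← inv_pow, inv_inv]
  have hcomp : emap k j = (fun x : Rd d => x + fun i => (j i : ℝ)/(k:ℝ))
      ∘ (fun y : Rd d => (k:ℝ)⁻¹ • y) := rfl
  have hm1 : Measurable fun y : Rd d => (k:ℝ)⁻¹ • y := measurable_const_smul _
  rw [hcomp, ← Measure.map_map (measurable_add_const _) hm1, hmap1,
    Measure.map_smul, map_add_right_eq_self]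

lemma cov (hd : 0 < d) (hk : 0 < k) (j : Fin d → Fin k) (F : Rd d → ℝ≥0∞)
    (hF : Measurable F) :
    ∫⁻ x in cube k j, F x
      = (ENNReal.ofReal ((k:ℝ)^d))⁻¹ * ∫⁻ y in unitCube d, F (emap k j y) := by
  have hk' : (0:ℝ) < k := by exact_mod_cast hk
  set c : ℝ≥0∞ := ENNReal.ofReal ((k:ℝ)^d) with hc
  have hc0 : c ≠ 0 := by
    rw [hc]
    exact (ENNReal.ofReal_pos.mpr (by positivity)).ne'
  have hcT : c ≠ ⊤ := ENNReal.ofReal_ne_top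
  have hvol : (volume : Measure (Rd d)) = c⁻¹ • Measure.map (emap k j) volume := by
    rw [map_emap_volume k hd hk j, smul_smul, ENNReal.inv_mul_cancel hc0 hcT, one_smul]
  calc ∫⁻ x in cube k j, F x ∂volume
      = ∫⁻ x in cube k j, F x ∂(c⁻¹ • Measure.map (emap k j) volume) := by rw [← hvol]
    _ = c⁻¹ * ∫⁻ x in cube k j, F x ∂(Measure.map (emap k j) volume) := by
        rw [Measure.restrict_smul, lintegral_smul_measure, smul_eq_mul]
    _ = c⁻¹ * ∫⁻ x, F x ∂(Measure.map (emap k j) (volume.restrict (unitCube d))) := by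
        rw [Measure.restrict_map (emap_measurable k j) (cube_measurable k j),
          emap_preimage k hk j]
    _ = c⁻¹ * ∫⁻ y in unitCube d, F (emap k j y) := by
        rw [lintegral_map hF (emap_measurable k j)]

def phiT (φ : ℝ → ℝ) : ℝ → ℝ := fun t => φ (max t 0)

lemma phiT_mono (hφ : PhiOK φ) : Monotone (phiT φ) := fun s t hst =>
  hφ.1 (Set.mem_Ici.mpr (le_max_right _ _)) (Set.mem_Ici.mpr (le_max_right _ _))
    (max_le_max hst le_rfl)

lemma phiT_eq (φ : ℝ → ℝ) {t : ℝ} (ht : 0 ≤ t) : phiT φ t = φ t := by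
  rw [phiT, max_eq_left ht]

lemma integrand_measurable (hnrm : IsNorm nrm) (hφ : PhiOK φ) (c : ℝ)
    (C : Finset (Rd d)) (hC : C.Nonempty) :
    Measurable fun x => ENNReal.ofReal (phiT φ (c * dSet nrm x ↑C)) :=
  ENNReal.measurable_ofReal.comp ((phiT_mono hφ).measurable.comp
    ((dSet_continuous hnrm C hC).measurable.const_mul c))

lemma dSet_emap (h : IsNorm nrm) (j : Fin d → Fin k) (y : Rd d) (C : Finset (Rd d)) :
    dSet nrm (emap k j y) ↑(C.image (emap k j)) = (k:ℝ)⁻¹ * dSet nrm y ↑C :=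
  dSet_image_affine h (by positivity) _ y C

lemma pow_rpow_inv (hd : 0 < d) (hk : 0 < k) : (((k:ℝ)^d) : ℝ) ^ (1/(d:ℝ)) = (k:ℝ) := by
  have hk0 : (0:ℝ) ≤ k := Nat.cast_nonneg k
  rw [← Real.rpow_natCast (k:ℝ) d, ← Real.rpow_mul hk0, mul_one_div,
    div_self (by exact_mod_cast hd.ne' : (d:ℝ) ≠ 0), Real.rpow_one]

lemma key (hd : 0 < d) (hnrm : IsNorm nrm) (hφ : PhiOK φ) (hk : 0 < k)
    {N η : ℝ} (hN : 0 < N) (hη : 0 < η)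
    (D : (Fin d → Fin k) → Finset (Rd d)) (hDne : ∀ j, (D j).Nonempty)
    (hcard : ((∑ j, (D j).card : ℕ) : ℝ) ≤ N) :
    fNq nrm φ N η ≤ (ENNReal.ofReal ((k:ℝ)^d))⁻¹ *
      ∑ j, ∫⁻ y in unitCube d, ENNReal.ofReal
        (φ ((N / (η * (k:ℝ)^d)) ^ (1/(d:ℝ)) * dSet nrm y ↑(D j))) := by
  classical
  have hk' : (0:ℝ) < k := by exact_mod_cast hk
  set c₀ : ℝ := (N/η) ^ (1/(d:ℝ)) with hc₀def
  set c₁ : ℝ := (N/(η*(k:ℝ)^d)) ^ (1/(d:ℝ)) with hc₁def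
  have hc₀ : 0 ≤ c₀ := Real.rpow_nonneg (by positivity) _
  have hc₁ : 0 ≤ c₁ := Real.rpow_nonneg (by positivity) _
  have hcc : c₀ * (k:ℝ)⁻¹ = c₁ := by
    have h1 : N/(η*(k:ℝ)^d) = (N/η) / ((k:ℝ)^d) := by ring
    have h2 : ((N/η) / ((k:ℝ)^d)) ^ (1/(d:ℝ))
        = (N/η)^(1/(d:ℝ)) / (((k:ℝ)^d))^(1/(d:ℝ)) :=
      Real.div_rpow (by positivity) (by positivity) _
    rw [hc₀def, hc₁def, h1, h2, pow_rpow_inv k hd hk]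
    ring
  set C : Finset (Rd d) := Finset.univ.biUnion fun j => (D j).image (emap k j) with hCdef
  have hCne : C.Nonempty := by
    obtain ⟨y0, hy0⟩ := hDne (fun _ => ⟨0, hk⟩)
    exact ⟨emap k (fun _ => ⟨0, hk⟩) y0, Finset.mem_biUnion.mpr
      ⟨_, Finset.mem_univ _, Finset.mem_image_of_mem _ hy0⟩⟩
  have hCcard : (C.card : ℝ) ≤ N := by
    have h1 : C.card ≤ ∑ j, ((D j).image (emap k j)).card := Finset.card_biUnion_le
    have h2 : ∑ j, ((D j).image (emap k j)).card ≤ ∑ j, (D j).card :=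
      Finset.sum_le_sum fun j _ => Finset.card_image_le
    calc (C.card : ℝ) ≤ ((∑ j, (D j).card : ℕ) : ℝ) := by exact_mod_cast h1.trans h2
      _ ≤ N := hcard
  have hsub : ∀ j, (((D j).image (emap k j) : Finset (Rd d)) : Set (Rd d)) ⊆ ↑C := by
    intro j
    rw [hCdef]
    exact Finset.coe_subset.mpr (Finset.subset_biUnion_of_mem (fun j => (D j).image (emap k j)) (Finset.mem_univ j))
  calc fNq nrm φ N η
      ≤ ∫⁻ x in unitCube d, ENNReal.ofReal (φ (c₀ * dSet nrm x ↑C)) := by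
        rw [fNq]
        exact iInf_le_of_le C (iInf_le_of_le hCne (iInf_le_of_le hCcard le_rfl))
    _ = ∫⁻ x in unitCube d, ENNReal.ofReal (phiT φ (c₀ * dSet nrm x ↑C)) :=
        lintegral_congr fun x => by
          rw [phiT_eq φ (mul_nonneg hc₀ (dSet_nonneg hnrm x _))]
    _ = ∑ j, ∫⁻ x in cube k j, ENNReal.ofReal (phiT φ (c₀ * dSet nrm x ↑C)) := by
        rw [cube_cover k hk, lintegral_iUnion (cube_measurable k) (cube_disjoint k hk),
          tsum_fintype]
    _ ≤ ∑ j, ∫⁻ x in cube k j,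
          ENNReal.ofReal (phiT φ (c₀ * dSet nrm x ↑((D j).image (emap k j)))) := by
        refine Finset.sum_le_sum fun j _ => lintegral_mono fun x => ?_
        exact ENNReal.ofReal_le_ofReal (phiT_mono hφ (mul_le_mul_of_nonneg_left
          (dSet_anti hnrm x (hsub j) (Finset.coe_nonempty.mpr ((hDne j).image _))) hc₀))
    _ = ∑ j, (ENNReal.ofReal ((k:ℝ)^d))⁻¹ * ∫⁻ y in unitCube d,
          ENNReal.ofReal (phiT φ (c₀ * dSet nrm (emap k j y) ↑((D j).image (emap k j)))) := by
        refine Finset.sum_congr rfl fun j _ => ?_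
        exact cov k hd hk j _ (integrand_measurable hnrm hφ c₀ _ ((hDne j).image _))
    _ = ∑ j, (ENNReal.ofReal ((k:ℝ)^d))⁻¹ * ∫⁻ y in unitCube d,
          ENNReal.ofReal (φ (c₁ * dSet nrm y ↑(D j))) := by
        refine Finset.sum_congr rfl fun j _ => ?_
        congr 1
        refine lintegral_congr fun y => ?_
        rw [dSet_emap k hnrm j y (D j), ← mul_assoc, hcc,
          phiT_eq φ (mul_nonneg hc₁ (dSet_nonneg hnrm y _))]
    _ = (ENNReal.ofReal ((k:ℝ)^d))⁻¹ * ∑ j, ∫⁻ y in unitCube d,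
          ENNReal.ofReal (φ (c₁ * dSet nrm y ↑(D j))) := by
        rw [Finset.mul_sum]

lemma fNq_exists {N' η' : ℝ} {b : ℝ≥0∞} (h : fNq nrm φ N' η' < b) :
    ∃ C : Finset (Rd d), C.Nonempty ∧ ((C.card:ℝ) ≤ N') ∧
      (∫⁻ x in unitCube d,
        ENNReal.ofReal (φ ((N'/η') ^ (1/(d:ℝ)) * dSet nrm x ↑C))) < b := by
  simp only [fNq, iInf_lt_iff] at h
  obtain ⟨C, hne, hcard, hI⟩ := h
  exact ⟨C, hne, hcard, hI⟩


end SS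

set_option maxHeartbeats 1000000

/-- Self-similarity inequality: for `M = k^d`, `η = αη₁ + βη₂`,
`f_N(η) ≤ a(M) f_{N₁/M}(η₁) + b(M) f_{N₂/M}(η₂)` with `b(M) = ⌊βM⌋/M`, `a(M) = 1 - b(M)`,
`N₁ = (η₁/η)N`, `N₂ = (η₂/η)N`. -/
theorem statement7 {d : ℕ} (hd : 0 < d)
    (nrm : Rd d → ℝ) (hnrm : IsNorm nrm) (φ : ℝ → ℝ) (hφ : PhiOK φ)
    (k : ℕ) (hk : 0 < k) (η₁ η₂ α β N : ℝ)
    (hη₁ : 0 < η₁) (hη₁₂ : η₁ < η₂) (hα : 0 ≤ α) (hβ : 0 ≤ β) (hαβ : α + β = 1)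
    (hN : 1 ≤ N) :
    fNq nrm φ N (α * η₁ + β * η₂) ≤
      ENNReal.ofReal (1 - ((⌊β * ((k:ℝ)^d)⌋ : ℝ) / (k:ℝ)^d)) *
        fNq nrm φ ((η₁ / (α * η₁ + β * η₂)) * N / (k:ℝ)^d) η₁ +
      ENNReal.ofReal ((⌊β * ((k:ℝ)^d)⌋ : ℝ) / (k:ℝ)^d) *
        fNq nrm φ ((η₂ / (α * η₁ + β * η₂)) * N / (k:ℝ)^d) η₂ := by
  classical
  have hk' : (0:ℝ) < k := by exact_mod_cast hk
  have hM : (0:ℝ) < (k:ℝ)^d := by positivity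
  set η : ℝ := α * η₁ + β * η₂ with hηdef
  have hβ1 : β ≤ 1 := by linarith
  have hη : 0 < η := by nlinarith
  have hη₂ : 0 < η₂ := lt_trans hη₁ hη₁₂
  set M : ℝ := (k:ℝ)^d with hMdef
  set m : ℕ := (⌊β * M⌋).toNat with hmdef
  have hm0 : (0:ℤ) ≤ ⌊β * M⌋ := Int.floor_nonneg.mpr (by positivity)
  have hfloor : ((⌊β * M⌋ : ℤ) : ℝ) = (m : ℝ) := by
    rw [hmdef]
    exact_mod_cast (Int.toNat_of_nonneg hm0).symm
  rw [hfloor]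
  have hmβ : (m:ℝ) ≤ β * M := hfloor ▸ Int.floor_le _
  have hMnat : ((k^d : ℕ) : ℝ) = M := by push_cast; rfl
  have hmM : m ≤ k^d := by
    have : (m:ℝ) ≤ ((k^d : ℕ) : ℝ) := by rw [hMnat]; nlinarith
    exact_mod_cast this
  -- the collection of subcubes used for the η₂ codebook
  have hcardJ : Fintype.card (Fin d → Fin k) = k^d := by
    rw [Fintype.card_fun, Fintype.card_fin, Fintype.card_fin]
  obtain ⟨S, -, hScard⟩ := Finset.exists_subset_card_eq (s := (Finset.univ : Finset (Fin d → Fin k))) (n := m)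
    (by rw [Finset.card_univ, hcardJ]; exact hmM)
  set N₁ : ℝ := η₁ / η * N / M with hN₁def
  set N₂ : ℝ := η₂ / η * N / M with hN₂def
  set f₁ : ℝ≥0∞ := fNq nrm φ N₁ η₁ with hf₁def
  set f₂ : ℝ≥0∞ := fNq nrm φ N₂ η₂ with hf₂def
  set a' : ℝ≥0∞ := ENNReal.ofReal (1 - (m:ℝ)/M) with ha'def
  set b' : ℝ≥0∞ := ENNReal.ofReal ((m:ℝ)/M) with hb'def
  show fNq nrm φ N η ≤ a' * f₁ + b' * f₂
  have hconst₁ : N₁ / η₁ = N / (η * M) := by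
    rw [hN₁def]; field_simp
  have hconst₂ : N₂ / η₂ = N / (η * M) := by
    rw [hN₂def]; field_simp
  have hmM' : (m:ℝ) ≤ M := by nlinarith
  have hdiv1 : (m:ℝ)/M ≤ 1 := (div_le_one hM).mpr hmM'
  have hab1 : a' + b' = 1 := by
    rw [ha'def, hb'def, ← ENNReal.ofReal_add (by linarith) (by positivity)]
    norm_num
  apply ENNReal.le_of_forall_pos_le_add
  intro ε hε htop
  have hεne : (ε : ℝ≥0∞) ≠ 0 := by exact_mod_cast hε.ne'
  have ha'top : a' ≠ ⊤ := ENNReal.ofReal_ne_top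
  have hb'top : b' ≠ ⊤ := ENNReal.ofReal_ne_top
  -- choose near-optimal codebooks
  obtain ⟨C₁, hC₁⟩ : ∃ C₁ : Finset (Rd d), m < k^d →
      C₁.Nonempty ∧ ((C₁.card:ℝ) ≤ N₁) ∧
      (∫⁻ x in unitCube d,
        ENNReal.ofReal (φ ((N / (η * M)) ^ (1/(d:ℝ)) * dSet nrm x ↑C₁))) ≤ f₁ + ε := by
    by_cases hmlt : m < k^d
    · have ha'0 : a' ≠ 0 := by
        rw [ha'def]
        simp only [ne_eq, ENNReal.ofReal_eq_zero, not_le]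
        have : (m:ℝ) < M := by
          calc (m:ℝ) < ((k^d:ℕ):ℝ) := by exact_mod_cast hmlt
            _ = M := hMnat
        have := div_lt_one hM |>.mpr this
        linarith
      have hf₁top : f₁ ≠ ⊤ := by
        intro h
        rw [h] at htop
        rw [ENNReal.mul_top ha'0] at htop
        simp at htop
      obtain ⟨C, h1, h2, h3⟩ := SS.fNq_exists (ENNReal.lt_add_right hf₁top hεne)
      rw [hconst₁] at h3
      exact ⟨C, fun _ => ⟨h1, h2, h3.le⟩⟩
    · exact ⟨{0}, fun h => absurd h hmlt⟩
  obtain ⟨C₂, hC₂⟩ : ∃ C₂ : Finset (Rd d), 0 < m →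
      C₂.Nonempty ∧ ((C₂.card:ℝ) ≤ N₂) ∧
      (∫⁻ x in unitCube d,
        ENNReal.ofReal (φ ((N / (η * M)) ^ (1/(d:ℝ)) * dSet nrm x ↑C₂))) ≤ f₂ + ε := by
    by_cases hmpos : 0 < m
    · have hb'0 : b' ≠ 0 := by
        rw [hb'def]
        simp only [ne_eq, ENNReal.ofReal_eq_zero, not_le]
        positivity
      have hf₂top : f₂ ≠ ⊤ := by
        intro h
        rw [h] at htop
        rw [ENNReal.mul_top hb'0] at htop
        simp at htop
      obtain ⟨C, h1, h2, h3⟩ := SS.fNq_exists (ENNReal.lt_add_right hf₂top hεne)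
      rw [hconst₂] at h3
      exact ⟨C, fun _ => ⟨h1, h2, h3.le⟩⟩
    · exact ⟨{0}, fun h => absurd h hmpos⟩
  set D : (Fin d → Fin k) → Finset (Rd d) := fun j => if j ∈ S then C₂ else C₁ with hDdef
  have hjS_pos : ∀ j, j ∈ S → 0 < m := by
    intro j hj
    rw [← hScard]
    exact Finset.card_pos.mpr ⟨j, hj⟩
  have hjS_lt : ∀ j, j ∉ S → m < k^d := by
    intro j hj
    rw [← hScard, ← hcardJ, ← Finset.card_univ]
    exact Finset.card_lt_card (Finset.ssubset_univ_iff.mpr (fun h => hj (h ▸ Finset.mem_univ j)))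
  have hDne : ∀ j, (D j).Nonempty := by
    intro j
    rw [hDdef]
    by_cases hj : j ∈ S
    · simpa [hj] using (hC₂ (hjS_pos j hj)).1
    · simpa [hj] using (hC₁ (hjS_lt j hj)).1
  -- cardinality bound
  have hDS : ∀ j ∈ S, D j = C₂ := fun j hj => by rw [hDdef]; simp [hj]
  have hDS' : ∀ j ∉ S, D j = C₁ := fun j hj => by rw [hDdef]; simp [hj]
  have hsumcard : (∑ j, (D j).card) = m * C₂.card + (k^d - m) * C₁.card := by
    rw [← Finset.sum_add_sum_compl S]
    congr 1
    · rw [Finset.sum_congr rfl (fun j hj => by rw [hDS j hj])]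
      rw [Finset.sum_const, hScard, smul_eq_mul]
    · rw [Finset.sum_congr rfl (fun j hj => by rw [hDS' j (Finset.mem_compl.mp hj)])]
      rw [Finset.sum_const, smul_eq_mul]
      congr 1
      rw [Finset.card_compl, hcardJ, hScard]
  have hcard : ((∑ j, (D j).card : ℕ) : ℝ) ≤ N := by
    have hcast : ((∑ j, (D j).card : ℕ) : ℝ) = (m:ℝ) * C₂.card + (M - m) * C₁.card := by
      rw [hsumcard]
      push_cast [Nat.cast_sub hmM]
      try rw [hMdef]
      try ring
    rw [hcast]
    have h₂ : (m:ℝ) * C₂.card ≤ m * N₂ := by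
      rcases Nat.eq_zero_or_pos m with h | h
      · simp [h]
      · exact mul_le_mul_of_nonneg_left (hC₂ h).2.1 (by positivity)
    have h₁ : (M - (m:ℝ)) * C₁.card ≤ (M - m) * N₁ := by
      rcases lt_or_eq_of_le hmM with hlt | heq
      · exact mul_le_mul_of_nonneg_left (hC₁ hlt).2.1 (by linarith)
      · have hmE : (m:ℝ) = M := by rw [← hMnat, heq]
        rw [hmE, sub_self, zero_mul, zero_mul]
    have hkey : (m:ℝ) * η₂ + (M - m) * η₁ ≤ η * M := by
      have h5 : (m:ℝ) * (η₂ - η₁) ≤ (β*M) * (η₂ - η₁) :=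
        mul_le_mul_of_nonneg_right hmβ (by linarith)
      have h6 : η * M = η₁ * M + (β * M) * (η₂ - η₁) := by
        have hα' : α = 1 - β := by linarith
        rw [hηdef, hα']; ring
      linarith [h5, h6]
    have hfin : (m:ℝ) * N₂ + (M - m) * N₁ ≤ N := by
      have he1 : (m:ℝ) * N₂ + (M - m) * N₁ = ((m:ℝ) * η₂ + (M - m) * η₁) * (N / (η * M)) := by
        rw [hN₁def, hN₂def]; field_simp
      have he2 : (η * M) * (N / (η * M)) = N := by
        rw [mul_comm]
        exact div_mul_cancel₀ N (ne_of_gt (by positivity))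
      calc (m:ℝ) * N₂ + (M - m) * N₁ = ((m:ℝ) * η₂ + (M - m) * η₁) * (N / (η * M)) := he1
        _ ≤ (η * M) * (N / (η * M)) := mul_le_mul_of_nonneg_right hkey (by positivity)
        _ = N := he2
    linarith
  set I₁ : ℝ≥0∞ := ∫⁻ x in unitCube d,
      ENNReal.ofReal (φ ((N / (η * M)) ^ (1/(d:ℝ)) * dSet nrm x ↑C₁)) with hI₁def
  set I₂ : ℝ≥0∞ := ∫⁻ x in unitCube d,
      ENNReal.ofReal (φ ((N / (η * M)) ^ (1/(d:ℝ)) * dSet nrm x ↑C₂)) with hI₂def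
  have hMm : ((k^d - m : ℕ) : ℝ) = M - m := by rw [Nat.cast_sub hmM, hMnat]
  have hkeyineq := SS.key k hd hnrm hφ hk (by linarith : (0:ℝ) < N) hη D hDne hcard
  rw [← hMdef] at hkeyineq
  have hIsum : ∑ j, (∫⁻ y in unitCube d, ENNReal.ofReal
        (φ ((N / (η * M)) ^ (1/(d:ℝ)) * dSet nrm y ↑(D j))))
      = (m:ℝ≥0∞) * I₂ + ((k^d - m : ℕ):ℝ≥0∞) * I₁ := by
    rw [← Finset.sum_add_sum_compl S]
    congr 1
    · rw [Finset.sum_congr rfl (fun j hj => by rw [hDS j hj])]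
      rw [Finset.sum_const, hScard, nsmul_eq_mul]
    · rw [Finset.sum_congr rfl (fun j hj => by rw [hDS' j (Finset.mem_compl.mp hj)])]
      rw [Finset.sum_const, nsmul_eq_mul, Finset.card_compl, hcardJ, hScard]
  have hb'eq : b' = (m:ℝ≥0∞) * (ENNReal.ofReal M)⁻¹ := by
    rw [hb'def, ENNReal.ofReal_div_of_pos hM, ENNReal.ofReal_natCast, div_eq_mul_inv]
  have ha'eq : a' = ((k^d - m : ℕ):ℝ≥0∞) * (ENNReal.ofReal M)⁻¹ := by
    have h7 : ((k^d - m : ℕ):ℝ)/M = 1 - (m:ℝ)/M := by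
      rw [hMm, sub_div, div_self hM.ne']
    rw [ha'def, ← h7, ENNReal.ofReal_div_of_pos hM, ENNReal.ofReal_natCast, div_eq_mul_inv]
  have ha'I : a' * I₁ ≤ a' * (f₁ + ε) := by
    rcases lt_or_eq_of_le hmM with hlt | heq
    · exact mul_le_mul_right (hC₁ hlt).2.2 a'
    · have hz : a' = 0 := by
        have hmE : (m:ℝ) = M := by rw [← hMnat, heq]
        rw [ha'def, hmE, div_self hM.ne', sub_self, ENNReal.ofReal_zero]
      rw [hz, zero_mul, zero_mul]
  have hb'I : b' * I₂ ≤ b' * (f₂ + ε) := by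
    rcases Nat.eq_zero_or_pos m with h | h
    · have hz : b' = 0 := by rw [hb'def, h]; simp
      rw [hz, zero_mul, zero_mul]
    · exact mul_le_mul_right (hC₂ h).2.2 b'
  calc fNq nrm φ N η
      ≤ (ENNReal.ofReal M)⁻¹ * ∑ j, (∫⁻ y in unitCube d, ENNReal.ofReal
          (φ ((N / (η * M)) ^ (1/(d:ℝ)) * dSet nrm y ↑(D j)))) := hkeyineq
    _ = (ENNReal.ofReal M)⁻¹ *
          ((m:ℝ≥0∞) * I₂ + ((k^d - m : ℕ):ℝ≥0∞) * I₁) := by rw [hIsum]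
    _ = b' * I₂ + a' * I₁ := by rw [hb'eq, ha'eq]; ring
    _ ≤ b' * (f₂ + ε) + a' * (f₁ + ε) := add_le_add hb'I ha'I
    _ = (a' * f₁ + b' * f₂) + (a' + b') * ε := by ring
    _ = (a' * f₁ + b' * f₂) + ε := by rw [hab1, one_mul]


end
end
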